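/- arXiv:0805.1859 — 2 statements merged into one kernel-verified Lean document; each statement's English description precedes it below -/
import Mathlib

section
/- Let n ≥ 3 be odd and let T be the triplet set on leaves {1,…,n} consisting of all triplets ab|c with a > c and b > c (a ≠ b), together with the triplets a(a+1)|n for each odd a with 1 ≤ a ≤ n−2. Then T is dense and there exists a level-1 network consistent with T that contains exactly one reticulation vertex. -/
/-!
Common definitions for formalizing "Constructing the Simplest Possible
Phylogenetic Network from Triplets" (van Iersel, Kelk).

A directed graph on a vertex type `V` is given by its arc set `A : Set (V × V)`.
-/

namespace Phylo

variable {V L : Type}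

/-- In-degree of a vertex. -/
noncomputable def indeg (A : Set (V × V)) (v : V) : ℕ := {u | (u, v) ∈ A}.ncard

/-- Out-degree of a vertex. -/
noncomputable def outdeg (A : Set (V × V)) (v : V) : ℕ := {w | (v, w) ∈ A}.ncard

/-- The root: indegree 0 and outdegree 2. -/
def IsRoot (A : Set (V × V)) (v : V) : Prop := indeg A v = 0 ∧ outdeg A v = 2

/-- A split vertex: indegree 1 and outdegree 2. -/
def IsSplit (A : Set (V × V)) (v : V) : Prop := indeg A v = 1 ∧ outdeg A v = 2

/-- A reticulation vertex: indegree 2 and outdegree 1. -/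
def IsRetic (A : Set (V × V)) (v : V) : Prop := indeg A v = 2 ∧ outdeg A v = 1

/-- A leaf vertex: indegree 1 and outdegree 0. -/
def IsLeafV (A : Set (V × V)) (v : V) : Prop := indeg A v = 1 ∧ outdeg A v = 0

/-- Directed reachability (reflexive-transitive closure of the arc relation). -/
def Reaches (A : Set (V × V)) : V → V → Prop :=
  Relation.ReflTransGen fun u v => (u, v) ∈ A

/-- A directed graph is acyclic if it has no directed cycle. -/
def Acyclic (A : Set (V × V)) : Prop := ∀ u v, (u, v) ∈ A → ¬ Reaches A v u

/-- Adjacency in the underlying undirected graph. -/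
def UAdj (A : Set (V × V)) (u v : V) : Prop := (u, v) ∈ A ∨ (v, u) ∈ A

/-- The underlying undirected graph is connected (on all of `V`). -/
def ConnectedGraph (A : Set (V × V)) : Prop :=
  ∀ u v : V, Relation.ReflTransGen (UAdj A) u v

/-- Undirected connectivity within a set `S` of vertices (in the induced subgraph). -/
def ConnWithin (A : Set (V × V)) (S : Set V) : Prop :=
  ∀ u ∈ S, ∀ v ∈ S, Relation.ReflTransGen (fun a b => a ∈ S ∧ b ∈ S ∧ UAdj A a b) u v

/-- A set of at least two vertices inducing a biconnected subgraph: it is connected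
and stays connected after removal of any single vertex. -/
def Biconnected (A : Set (V × V)) (S : Set V) : Prop :=
  2 ≤ S.ncard ∧ ConnWithin A S ∧ ∀ w ∈ S, ConnWithin A (S \ {w})

/-- A biconnected component: a maximal biconnected subgraph. -/
def BiconnComp (A : Set (V × V)) (S : Set V) : Prop :=
  Biconnected A S ∧ ∀ S', Biconnected A S' → S ⊆ S' → S' = S

/-- The arcs leaving a set of vertices. -/
def outArcs (A : Set (V × V)) (S : Set V) : Set (V × V) :=
  {a ∈ A | a.1 ∈ S ∧ a.2 ∉ S}

/-- A phylogenetic network on the (finite) vertex type `V` with leaves labelled by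
elements of `L`: a directed acyclic graph with exactly one vertex of indegree 0
and outdegree 2 (the root), all other vertices being split vertices, reticulation
vertices or leaves; leaves are distinctly labelled.  Moreover (to avoid redundant
networks) every nontrivial biconnected component has at least three outgoing arcs. -/
structure PhyloNetwork (V L : Type) : Type where
  vfin : Finite V
  arcs : Set (V × V)
  lab : V → L
  acyclic : Acyclic arcs
  root_ex : ∃ r, IsRoot arcs r
  root_unique : ∀ r r', IsRoot arcs r → IsRoot arcs r' → r = r'
  vertex_type : ∀ v, IsRoot arcs v ∨ IsSplit arcs v ∨ IsRetic arcs v ∨ IsLeafV arcs v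
  lab_inj : ∀ u v, IsLeafV arcs u → IsLeafV arcs v → lab u = lab v → u = v
  bicomp_out : ∀ S, BiconnComp arcs S → S.ncard ≠ 2 → 3 ≤ (outArcs arcs S).ncard

/-- The set of leaf labels of a network. -/
def leafSet (N : PhyloNetwork V L) : Set L := {x | ∃ v, IsLeafV N.arcs v ∧ N.lab v = x}

/-- A directed path, as a nonempty list of distinct vertices consecutively joined by arcs. -/
def IsPath (A : Set (V × V)) (l : List V) : Prop :=
  l ≠ [] ∧ l.Nodup ∧ l.Chain' fun a b => (a, b) ∈ A

/-- A directed path from `u` to `v`. -/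
def IsPathFromTo (A : Set (V × V)) (l : List V) (u v : V) : Prop :=
  IsPath A l ∧ l.head? = some u ∧ l.getLast? = some v

/-- `w` is an endpoint of the path `l`. -/
def IsEndpoint (l : List V) (w : V) : Prop := l.head? = some w ∨ l.getLast? = some w

/-- Two paths are internally vertex-disjoint: any common vertex is an endpoint of both. -/
def IntDisjoint (p q : List V) : Prop :=
  ∀ w, w ∈ p → w ∈ q → IsEndpoint p w ∧ IsEndpoint q w

/-- An embedding of the triplet `xy|z` with summit `p` and cherry vertex `q`:
pairwise internally vertex-disjoint directed paths `q→x`, `q→y`, `p→q`, `p→z`. -/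
def HasEmbedding (A : Set (V × V)) (p q x y z : V) : Prop :=
  p ≠ q ∧ ∃ Pqx Pqy Ppq Ppz : List V,
    IsPathFromTo A Pqx q x ∧ IsPathFromTo A Pqy q y ∧
    IsPathFromTo A Ppq p q ∧ IsPathFromTo A Ppz p z ∧
    IntDisjoint Pqx Pqy ∧ IntDisjoint Pqx Ppq ∧ IntDisjoint Pqx Ppz ∧
    IntDisjoint Pqy Ppq ∧ IntDisjoint Pqy Ppz ∧ IntDisjoint Ppq Ppz

/-- The triplet `xy|z` (on leaf labels) is consistent with the network `N`. -/
def ConsistentT (N : PhyloNetwork V L) (x y z : L) : Prop :=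
  ∃ a b c : V, IsLeafV N.arcs a ∧ IsLeafV N.arcs b ∧ IsLeafV N.arcs c ∧
    N.lab a = x ∧ N.lab b = y ∧ N.lab c = z ∧ a ≠ b ∧ a ≠ c ∧ b ≠ c ∧
    ∃ p q, HasEmbedding N.arcs p q a b c

/-- `T(N)`: the set of all triplets consistent with `N`
(the triple `(x,y,z)` codes the triplet `xy|z`). -/
def TN (N : PhyloNetwork V L) : Set (L × L × L) := {t | ConsistentT N t.1 t.2.1 t.2.2}

/-- `N` is consistent with every triplet in `T`. -/
def ConsistentSet (N : PhyloNetwork V L) (T : Set (L × L × L)) : Prop :=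
  ∀ t ∈ T, ConsistentT N t.1 t.2.1 t.2.2

/-- `N` reflects `T` if `T(N) = T`. -/
def Reflects (N : PhyloNetwork V L) (T : Set (L × L × L)) : Prop := TN N = T

/-- `L(T)`: the set of leaves occurring in a triplet set. -/
def tripletLeaves (T : Set (L × L × L)) : Set L :=
  {x | ∃ t ∈ T, x = t.1 ∨ x = t.2.1 ∨ x = t.2.2}

/-- `T` is a well-formed triplet set: in each triplet the three leaves are distinct, and
the coding is invariant under swapping the first two coordinates (`xy|z = yx|z`). -/
def IsTripletSet (T : Set (L × L × L)) : Prop :=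
  ∀ t ∈ T, (t.2.1, t.1, t.2.2) ∈ T ∧ t.1 ≠ t.2.1 ∧ t.1 ≠ t.2.2 ∧ t.2.1 ≠ t.2.2

/-- `T` is dense: for any three distinct leaves at least one triplet on them is present. -/
def DenseT (T : Set (L × L × L)) : Prop :=
  ∀ x ∈ tripletLeaves T, ∀ y ∈ tripletLeaves T, ∀ z ∈ tripletLeaves T,
    x ≠ y → x ≠ z → y ≠ z → (x, y, z) ∈ T ∨ (x, z, y) ∈ T ∨ (y, z, x) ∈ T

/-- `S` is an SN-set of `T` with respect to the leaf set `U`: `S ⊆ U` and there is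
no triplet `xy|z ∈ T` with `x, z ∈ S` and `y ∉ S`. -/
def SNSetOn (T : Set (L × L × L)) (U S : Set L) : Prop :=
  S ⊆ U ∧ ¬ ∃ x y z, (x, y, z) ∈ T ∧ x ∈ S ∧ z ∈ S ∧ y ∉ S

/-- `S` is an SN-set of `T`. -/
def SNSet (T : Set (L × L × L)) (S : Set L) : Prop := SNSetOn T (tripletLeaves T) S

/-- `S` is a maximal SN-set: a nontrivial SN-set not strictly contained
in any nontrivial SN-set. -/
def MaxSNSet (T : Set (L × L × L)) (S : Set L) : Prop :=
  SNSet T S ∧ S ≠ tripletLeaves T ∧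
    ∀ S', SNSet T S' → S' ≠ tripletLeaves T → S ⊆ S' → S' = S

/-- `S` is an SN-set maximal under the restriction of not containing `B`. -/
def MaxSNAvoid (T : Set (L × L × L)) (B S : Set L) : Prop :=
  SNSet T S ∧ ¬ B ⊆ S ∧ ∀ S', SNSet T S' → ¬ B ⊆ S' → S ⊆ S' → S' = S

/-- `T|S`: the triplets of `T` all of whose leaves lie in `S`. -/
def restrictT (T : Set (L × L × L)) (S : Set L) : Set (L × L × L) :=
  {t ∈ T | t.1 ∈ S ∧ t.2.1 ∈ S ∧ t.2.2 ∈ S}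

/-- A cut-arc: an arc whose removal disconnects the underlying undirected graph. -/
def CutArc (A : Set (V × V)) (a : V × V) : Prop :=
  a ∈ A ∧ ¬ ConnectedGraph (A \ {a})

/-- A simple network: it contains a reticulation vertex and all its cut-arcs are
trivial (i.e. end in a leaf). -/
def SimpleNet (N : PhyloNetwork V L) : Prop :=
  (∃ v, IsRetic N.arcs v) ∧ ∀ a, CutArc N.arcs a → IsLeafV N.arcs a.2

/-- A level-`k` network: every biconnected component contains at most `k`
reticulation vertices. -/
def IsLevel (N : PhyloNetwork V L) (k : ℕ) : Prop :=
  ∀ S, BiconnComp N.arcs S → {v ∈ S | IsRetic N.arcs v}.ncard ≤ k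

/-- The total number of reticulation vertices of a network. -/
noncomputable def numRetic (N : PhyloNetwork V L) : ℕ := {v | IsRetic N.arcs v}.ncard

/-- The level of a network: the smallest `k` such that it is a level-`k` network. -/
noncomputable def netLevel (N : PhyloNetwork V L) : ℕ := sInf {k | IsLevel N k}

/-- A highest cut-arc: a cut-arc not reachable from any other cut-arc. -/
def HighestCutArc (A : Set (V × V)) (a : V × V) : Prop :=
  CutArc A a ∧ ∀ b, CutArc A b → b ≠ a → ¬ Reaches A b.2 a.1

/-- The set of leaf labels below a vertex `v`. -/
def leavesBelowV (N : PhyloNetwork V L) (v : V) : Set L :=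
  {x | ∃ w, IsLeafV N.arcs w ∧ Reaches N.arcs v w ∧ N.lab w = x}

/-- An (undirected) cycle in the underlying undirected graph, as a list of at least
three distinct vertices that are consecutively adjacent, the last being adjacent
to the first. -/
def IsUCycle (A : Set (V × V)) (l : List V) : Prop :=
  3 ≤ l.length ∧ l.Nodup ∧ l.Chain' (UAdj A) ∧
    ∃ u w, l.head? = some u ∧ l.getLast? = some w ∧ UAdj A w u

/-- A highest reticulation: a reticulation lying on a cycle through the root. -/
def HighestRetic (N : PhyloNetwork V L) (r : V) : Prop :=
  IsRetic N.arcs r ∧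
    ∃ c, IsUCycle N.arcs c ∧ r ∈ c ∧ ∃ rt, IsRoot N.arcs rt ∧ rt ∈ c

/-- `BHR(N)`: the set of leaves below a highest reticulation. -/
def BHR (N : PhyloNetwork V L) : Set L :=
  {x | ∃ r, HighestRetic N r ∧ x ∈ leavesBelowV N r}

/-- The collection of sets of leaves below the highest cut-arcs of `N`. -/
def highCutArcLeafSets (N : PhyloNetwork V L) : Set (Set L) :=
  {S | ∃ a, HighestCutArc N.arcs a ∧ S = leavesBelowV N a.2}

/-- `CutInduce(N,T)`: the induced triplet set on the sets of leaves below the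
highest cut-arcs of `N`. -/
def CutInduce (N : PhyloNetwork V L) (T : Set (L × L × L)) :
    Set (Set L × Set L × Set L) :=
  {t | t.1 ∈ highCutArcLeafSets N ∧ t.2.1 ∈ highCutArcLeafSets N ∧
       t.2.2 ∈ highCutArcLeafSets N ∧
       t.1 ≠ t.2.1 ∧ t.1 ≠ t.2.2 ∧ t.2.1 ≠ t.2.2 ∧
       ∃ x ∈ t.1, ∃ y ∈ t.2.1, ∃ z ∈ t.2.2, (x, y, z) ∈ T}

/-- `T ∇ C`: the triplet set induced by a collection `C` of leaf sets. -/
def TInduced (T : Set (L × L × L)) (C : Set (Set L)) : Set (Set L × Set L × Set L) :=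
  {t | t.1 ∈ C ∧ t.2.1 ∈ C ∧ t.2.2 ∈ C ∧
       t.1 ≠ t.2.1 ∧ t.1 ≠ t.2.2 ∧ t.2.1 ≠ t.2.2 ∧
       ∃ x ∈ t.1, ∃ y ∈ t.2.1, ∃ z ∈ t.2.2, (x, y, z) ∈ T}

/-- A label-preserving isomorphism of networks. -/
def NetIso {V₁ V₂ L : Type} (N₁ : PhyloNetwork V₁ L) (N₂ : PhyloNetwork V₂ L) : Prop :=
  ∃ e : V₁ ≃ V₂, (∀ u v : V₁, (u, v) ∈ N₁.arcs ↔ (e u, e v) ∈ N₂.arcs) ∧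
    ∀ v, IsLeafV N₁.arcs v → N₂.lab (e v) = N₁.lab v

/-- A (rooted, binary) phylogenetic tree given by its arc set: acyclic, a unique
vertex of indegree 0, every vertex of indegree at most 1 and outdegree 0 or 2.
(The single-vertex tree is allowed.) -/
def IsTreeArcs (A : Set (V × V)) : Prop :=
  Acyclic A ∧ (∃! r, indeg A r = 0) ∧ (∀ v, indeg A v ≤ 1) ∧
    ∀ v, outdeg A v = 0 ∨ outdeg A v = 2

/-- The leaf labels of a tree (leaves are the vertices of outdegree 0). -/
def treeLeafSet (A : Set (V × V)) (lab : V → L) : Set L :=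
  {x | ∃ v, outdeg A v = 0 ∧ lab v = x}

/-- The triplet `xy|z` is consistent with the tree given by `A` and labelling `lab`. -/
def TreeConsistentTriplet (A : Set (V × V)) (lab : V → L) (x y z : L) : Prop :=
  ∃ a b c : V, outdeg A a = 0 ∧ outdeg A b = 0 ∧ outdeg A c = 0 ∧
    lab a = x ∧ lab b = y ∧ lab c = z ∧ a ≠ b ∧ a ≠ c ∧ b ≠ c ∧
    ∃ p q, HasEmbedding A p q a b c

/-- A CandidateTBR SN-set: an SN-set `S` of `T` such that `T|S` is consistent with
some phylogenetic tree on the leaf set `S`. -/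
def CandidateTBR (T : Set (L × L × L)) (S : Set L) : Prop :=
  SNSet T S ∧ ∃ (V : Type) (_ : Finite V) (A : Set (V × V)) (lab : V → L),
    IsTreeArcs A ∧
    (∀ u v, outdeg A u = 0 → outdeg A v = 0 → lab u = lab v → u = v) ∧
    treeLeafSet A lab = S ∧
    ∀ t ∈ restrictT T S, TreeConsistentTriplet A lab t.1 t.2.1 t.2.2

/-- `S'` is an SN-set of `T|S` (with leaf set `S`) that is maximal under the
restriction of being a nontrivial (proper) subset of `S`. -/
def MaxProperSN (T : Set (L × L × L)) (S S' : Set L) : Prop :=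
  SNSetOn (restrictT T S) S S' ∧ S' ≠ S ∧
    ∀ S'', SNSetOn (restrictT T S) S S'' → S'' ≠ S → S' ⊆ S'' → S'' = S'

/-- The triplet set of Section 2: all triplets `ab|c` on `{1,…,n}` with `a,b > c`
(`a ≠ b`), together with the triplets `a(a+1)|n` for odd `a` with `1 ≤ a ≤ n-2`. -/
def exampleT (n : ℕ) : Set (ℕ × ℕ × ℕ) :=
  {t | 1 ≤ t.1 ∧ t.1 ≤ n ∧ 1 ≤ t.2.1 ∧ t.2.1 ≤ n ∧ 1 ≤ t.2.2 ∧ t.2.2 ≤ n ∧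
       t.1 ≠ t.2.1 ∧ t.2.2 < t.1 ∧ t.2.2 < t.2.1} ∪
  {t | ∃ a, Odd a ∧ 1 ≤ a ∧ a ≤ n - 2 ∧ t = (a, a + 1, n)}

/-! ### Auxiliary construction for Statement 14 -/

section Construction

variable {n : ℕ}

/-- Arc relation on vertex codes: `0` is the root, `1,…,n-1` the spine vertices,
`n` the reticulation, `n+1,…,2n` the leaves (leaf `n+j` has label `j`). -/
def Arc (n i j : ℕ) : Prop :=
  (i < n ∧ j = i + 1) ∨ (i = 0 ∧ j = n) ∨ (1 ≤ i ∧ i ≤ n ∧ j = n + i)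

/-- Vertex with code `k`. -/
def cc (n k : ℕ) : Fin (2 * n + 1) := ⟨k % (2 * n + 1), Nat.mod_lt _ (by omega)⟩

/-- The arc set of the example network. -/
def AA (n : ℕ) : Set (Fin (2 * n + 1) × Fin (2 * n + 1)) :=
  {p | Arc n p.1.val p.2.val}

lemma cval {k : ℕ} (h : k ≤ 2 * n) : (cc n k).val = k := Nat.mod_eq_of_lt (by omega)

lemma veq (v : Fin (2 * n + 1)) : v = cc n v.val :=
  Fin.ext (by rw [cval (by omega)])

lemma cc_eq_of_val {w : Fin (2 * n + 1)} {k : ℕ} (h : w.val = k) : w = cc n k := by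
  subst h; exact veq w

lemma arc_cc {i j : ℕ} (hi : i ≤ 2 * n) (hj : j ≤ 2 * n) (h : Arc n i j) :
    (cc n i, cc n j) ∈ AA n := by
  simp only [AA, Set.mem_setOf_eq, cval hi, cval hj]; exact h

lemma mem_AA {u v : Fin (2 * n + 1)} : (u, v) ∈ AA n ↔ Arc n u.val v.val := Iff.rfl

lemma arc_lt (hn : 3 ≤ n) {u v : Fin (2 * n + 1)} (h : (u, v) ∈ AA n) : u.val < v.val := by
  have h' : Arc n u.val v.val := h
  rcases h' with ⟨h1, h2⟩ | ⟨h1, h2⟩ | ⟨h1, h2, h3⟩ <;> omega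

lemma reaches_le (hn : 3 ≤ n) {u v : Fin (2 * n + 1)} (h : Reaches (AA n) u v) :
    u.val ≤ v.val := by
  induction h with
  | refl => exact le_rfl
  | tail _ h ih => exact le_trans ih (le_of_lt (arc_lt hn h))

lemma AA_acyclic (hn : 3 ≤ n) : Acyclic (AA n) := by
  intro u v h hr
  exact absurd (reaches_le hn hr) (not_le.2 (arc_lt hn h))

/-! #### Neighbourhoods and degrees -/

lemma pred_root (hn : 3 ≤ n) {v : Fin (2 * n + 1)} (hv : v.val = 0) :
    {u | (u, v) ∈ AA n} = (∅ : Set (Fin (2 * n + 1))) := by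
  ext u
  have hu := u.isLt
  simp only [Set.mem_setOf_eq, Set.mem_empty_iff_false, iff_false, mem_AA, Arc, hv]
  omega

lemma pred_mid (hn : 3 ≤ n) {v : Fin (2 * n + 1)} (hv1 : 1 ≤ v.val) (hv2 : v.val ≤ n - 1) :
    {u | (u, v) ∈ AA n} = {cc n (v.val - 1)} := by
  ext u
  have hu := u.isLt
  simp only [Set.mem_setOf_eq, Set.mem_singleton_iff, mem_AA, Arc]
  constructor
  · intro h; exact cc_eq_of_val (by omega)
  · intro h; subst h; rw [cval (by omega)] <;> (try simp only [true_and, and_true, true_or, or_true]) <;> omega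

lemma pred_ret (hn : 3 ≤ n) {v : Fin (2 * n + 1)} (hv : v.val = n) :
    {u | (u, v) ∈ AA n} = {cc n 0, cc n (n - 1)} := by
  ext u
  have hu := u.isLt
  simp only [Set.mem_setOf_eq, Set.mem_insert_iff, Set.mem_singleton_iff, mem_AA, Arc]
  constructor
  · intro h
    rcases h with ⟨h1, h2⟩ | ⟨h1, h2⟩ | ⟨h1, h2, h3⟩
    · exact Or.inr (cc_eq_of_val (by omega))
    · exact Or.inl (cc_eq_of_val (by omega))
    · omega
  · rintro (h | h) <;> subst h <;> rw [cval (by omega)] <;> (try simp only [true_and, and_true, true_or, or_true]) <;> omega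

lemma pred_leaf (hn : 3 ≤ n) {v : Fin (2 * n + 1)} (hv : n + 1 ≤ v.val) :
    {u | (u, v) ∈ AA n} = {cc n (v.val - n)} := by
  ext u
  have hu := u.isLt
  have hv' := v.isLt
  simp only [Set.mem_setOf_eq, Set.mem_singleton_iff, mem_AA, Arc]
  constructor
  · intro h; exact cc_eq_of_val (by omega)
  · intro h; subst h; rw [cval (by omega)] <;> (try simp only [true_and, and_true, true_or, or_true]) <;> omega

lemma succ_root (hn : 3 ≤ n) {v : Fin (2 * n + 1)} (hv : v.val = 0) :
    {w | (v, w) ∈ AA n} = {cc n 1, cc n n} := by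
  ext w
  have hw := w.isLt
  simp only [Set.mem_setOf_eq, Set.mem_insert_iff, Set.mem_singleton_iff, mem_AA, Arc, hv]
  constructor
  · intro h
    rcases h with ⟨h1, h2⟩ | ⟨h1, h2⟩ | ⟨h1, h2, h3⟩
    · exact Or.inl (cc_eq_of_val (by omega))
    · exact Or.inr (cc_eq_of_val (by omega))
    · omega
  · rintro (h | h) <;> subst h <;> rw [cval (by omega)] <;> (try simp only [true_and, and_true, true_or, or_true]) <;> omega

lemma succ_mid (hn : 3 ≤ n) {v : Fin (2 * n + 1)} (hv1 : 1 ≤ v.val) (hv2 : v.val ≤ n - 1) :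
    {w | (v, w) ∈ AA n} = {cc n (v.val + 1), cc n (n + v.val)} := by
  ext w
  have hw := w.isLt
  simp only [Set.mem_setOf_eq, Set.mem_insert_iff, Set.mem_singleton_iff, mem_AA, Arc]
  constructor
  · intro h
    rcases h with ⟨h1, h2⟩ | ⟨h1, h2⟩ | ⟨h1, h2, h3⟩
    · exact Or.inl (cc_eq_of_val (by omega))
    · omega
    · exact Or.inr (cc_eq_of_val (by omega))
  · rintro (h | h) <;> subst h <;> rw [cval (by omega)] <;> (try simp only [true_and, and_true, true_or, or_true]) <;> omega

lemma succ_ret (hn : 3 ≤ n) {v : Fin (2 * n + 1)} (hv : v.val = n) :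
    {w | (v, w) ∈ AA n} = {cc n (2 * n)} := by
  ext w
  have hw := w.isLt
  simp only [Set.mem_setOf_eq, Set.mem_singleton_iff, mem_AA, Arc, hv]
  constructor
  · intro h; refine cc_eq_of_val (by omega)
  · intro h; subst h; rw [cval (by omega)] <;> (try simp only [true_and, and_true, true_or, or_true]) <;> omega

lemma succ_leaf (hn : 3 ≤ n) {v : Fin (2 * n + 1)} (hv : n + 1 ≤ v.val) :
    {w | (v, w) ∈ AA n} = (∅ : Set (Fin (2 * n + 1))) := by
  ext w
  have hw := w.isLt
  simp only [Set.mem_setOf_eq, Set.mem_empty_iff_false, iff_false, mem_AA, Arc]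
  omega

lemma cc_ne {j k : ℕ} (hj : j ≤ 2 * n) (hk : k ≤ 2 * n) (h : j ≠ k) : cc n j ≠ cc n k := by
  intro he
  exact h (by rw [← cval hj, ← cval hk, he])

lemma indeg_eval (hn : 3 ≤ n) (v : Fin (2 * n + 1)) :
    (v.val = 0 ∧ indeg (AA n) v = 0) ∨
    (1 ≤ v.val ∧ v.val ≤ n - 1 ∧ indeg (AA n) v = 1) ∨
    (v.val = n ∧ indeg (AA n) v = 2) ∨
    (n + 1 ≤ v.val ∧ indeg (AA n) v = 1) := by
  have hv := v.isLt
  rcases Nat.lt_or_ge v.val 1 with h | h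
  · exact Or.inl ⟨by omega, by rw [indeg, pred_root hn (by omega)]; simp⟩
  rcases Nat.lt_or_ge v.val n with h2 | h2
  · exact Or.inr (Or.inl ⟨h, by omega, by rw [indeg, pred_mid hn h (by omega)]; simp⟩)
  rcases Nat.lt_or_ge v.val (n + 1) with h3 | h3
  · refine Or.inr (Or.inr (Or.inl ⟨by omega, ?_⟩))
    rw [indeg, pred_ret hn (by omega)]
    exact Set.ncard_pair (cc_ne (by omega) (by omega) (by omega))
  · exact Or.inr (Or.inr (Or.inr ⟨h3, by rw [indeg, pred_leaf hn (by omega)]; simp⟩))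

lemma outdeg_eval (hn : 3 ≤ n) (v : Fin (2 * n + 1)) :
    (v.val = 0 ∧ outdeg (AA n) v = 2) ∨
    (1 ≤ v.val ∧ v.val ≤ n - 1 ∧ outdeg (AA n) v = 2) ∨
    (v.val = n ∧ outdeg (AA n) v = 1) ∨
    (n + 1 ≤ v.val ∧ outdeg (AA n) v = 0) := by
  have hv := v.isLt
  rcases Nat.lt_or_ge v.val 1 with h | h
  · refine Or.inl ⟨by omega, ?_⟩
    rw [outdeg, succ_root hn (by omega)]
    exact Set.ncard_pair (cc_ne (by omega) (by omega) (by omega))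
  rcases Nat.lt_or_ge v.val n with h2 | h2
  · refine Or.inr (Or.inl ⟨h, by omega, ?_⟩)
    rw [outdeg, succ_mid hn h (by omega)]
    exact Set.ncard_pair (cc_ne (by omega) (by omega) (by omega))
  rcases Nat.lt_or_ge v.val (n + 1) with h3 | h3
  · exact Or.inr (Or.inr (Or.inl ⟨by omega, by rw [outdeg, succ_ret hn (by omega)]; simp⟩))
  · exact Or.inr (Or.inr (Or.inr ⟨h3, by rw [outdeg, succ_leaf hn h3]; simp⟩))

lemma isleaf_iff (hn : 3 ≤ n) (v : Fin (2 * n + 1)) :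
    IsLeafV (AA n) v ↔ n + 1 ≤ v.val := by
  constructor
  · rintro ⟨h1, h2⟩
    rcases outdeg_eval hn v with ⟨_, h⟩ | ⟨_, _, h⟩ | ⟨_, h⟩ | ⟨h, _⟩ <;> omega
  · intro h
    refine ⟨?_, ?_⟩
    · rcases indeg_eval hn v with ⟨h', h''⟩ | ⟨h', _, h''⟩ | ⟨h', h''⟩ | ⟨h', h''⟩ <;> omega
    · rw [outdeg, succ_leaf hn h]; simp

lemma isretic_iff (hn : 3 ≤ n) (v : Fin (2 * n + 1)) :
    IsRetic (AA n) v ↔ v.val = n := by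
  constructor
  · rintro ⟨h1, h2⟩
    rcases indeg_eval hn v with ⟨h', h''⟩ | ⟨h', _, h''⟩ | ⟨h', h''⟩ | ⟨h', h''⟩ <;> omega
  · intro h
    exact ⟨by
        rw [indeg, pred_ret hn h]
        exact Set.ncard_pair (cc_ne (by omega) (by omega) (by omega)),
      by rw [outdeg, succ_ret hn h]; simp⟩

lemma isroot_iff (hn : 3 ≤ n) (v : Fin (2 * n + 1)) :
    IsRoot (AA n) v ↔ v.val = 0 := by
  constructor
  · rintro ⟨h1, h2⟩
    rcases indeg_eval hn v with ⟨h', h''⟩ | ⟨h', _, h''⟩ | ⟨h', h''⟩ | ⟨h', h''⟩ <;> omega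
  · intro h
    refine ⟨by rw [indeg, pred_root hn h]; simp, ?_⟩
    rw [outdeg, succ_root hn h]
    exact Set.ncard_pair (cc_ne (by omega) (by omega) (by omega))

end Construction

/-! #### Paths -/

section Paths

variable {n : ℕ}

/-- Spine path `s, s+1, …, s+m-1`. -/
def sp (n s m : ℕ) : List (Fin (2 * n + 1)) := (List.range' s m).map (cc n)

/-- Spine path followed by a pendant leaf: `s, …, s+m-1, n+s+m-1`. -/
def pd (n s m : ℕ) : List (Fin (2 * n + 1)) := sp n s m ++ [cc n (n + s + m - 1)]

lemma sp_ne (hm : 1 ≤ m) : sp n s m ≠ [] := by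
  simp only [sp, ne_eq, List.map_eq_nil_iff, List.range'_eq_nil_iff]
  omega

lemma sp_head (hm : 1 ≤ m) : (sp n s m).head? = some (cc n s) := by
  obtain ⟨m', rfl⟩ : ∃ m', m = m' + 1 := ⟨m - 1, by omega⟩
  simp [sp, List.range'_succ]

lemma sp_last (hm : 1 ≤ m) : (sp n s m).getLast? = some (cc n (s + m - 1)) := by
  obtain ⟨m', rfl⟩ : ∃ m', m = m' + 1 := ⟨m - 1, by omega⟩
  have hr : List.range' s (m' + 1) = List.range' s m' ++ [s + m'] := by
    have := List.range'_concat (step := 1) (s := s) (n := m')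
    simpa using this
  simp [sp, hr, List.getLast?_concat, Nat.add_sub_cancel]

lemma sp_mem (hb : s + m ≤ n + 1) {w : Fin (2 * n + 1)} (hw : w ∈ sp n s m) :
    s ≤ w.val ∧ w.val < s + m := by
  simp only [sp, List.mem_map, List.mem_range'_1] at hw
  obtain ⟨k, hk, rfl⟩ := hw
  rw [cval (by omega)]
  omega

lemma sp_nodup (hb : s + m ≤ n + 1) : (sp n s m).Nodup := by
  have hnd : (List.range' s m).Nodup := List.nodup_range'
  refine hnd.map_on ?_
  intro x hx y hy hxy
  rw [List.mem_range'_1] at hx hy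
  rw [← cval (n := n) (k := x) (by omega), ← cval (n := n) (k := y) (by omega), hxy]

lemma sp_chain (hb : s + m ≤ n + 1) :
    (sp n s m).Chain' (fun a b => (a, b) ∈ AA n) := by
  rw [sp]; change List.IsChain _ _; rw [List.isChain_map]
  induction m generalizing s with
  | zero => simp
  | succ m ih =>
    rw [List.range'_succ]
    rcases Nat.eq_zero_or_pos m with rfl | hm
    · simp
    · obtain ⟨m', rfl⟩ : ∃ m', m = m' + 1 := ⟨m - 1, by omega⟩
      rw [List.isChain_cons]
      refine ⟨?_, ih (by omega)⟩
      intro b hb'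
      rw [List.range'_succ, List.head?_cons, Option.mem_def, Option.some_inj] at hb'
      subst hb'
      exact arc_cc (by omega) (by omega) (Or.inl ⟨by omega, rfl⟩)

lemma sp_pathto (hm : 1 ≤ m) (hb : s + m ≤ n + 1) {e : ℕ} (he : e = s + m - 1) :
    IsPathFromTo (AA n) (sp n s m) (cc n s) (cc n e) := by
  subst he
  exact ⟨⟨sp_ne hm, sp_nodup hb, sp_chain hb⟩, sp_head hm, sp_last hm⟩

lemma pd_head (hm : 1 ≤ m) : (pd n s m).head? = some (cc n s) := by
  rw [pd]
  have h := sp_head (n := n) (s := s) hm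
  cases hsp : sp n s m with
  | nil => rw [hsp] at h; simp at h
  | cons a l => rw [hsp] at h; simp at h; simp [h]

lemma pd_last : (pd n s m).getLast? = some (cc n (n + s + m - 1)) := by
  rw [pd]; exact List.getLast?_concat

lemma pd_mem (h2 : 2 ≤ s + m) (hb : s + m ≤ n + 1) {w : Fin (2 * n + 1)}
    (hw : w ∈ pd n s m) : (s ≤ w.val ∧ w.val < s + m) ∨ w.val = n + s + m - 1 := by
  rw [pd, List.mem_append] at hw
  rcases hw with hw | hw
  · exact Or.inl (sp_mem hb hw)
  · simp only [List.mem_singleton] at hw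
    subst hw
    exact Or.inr (cval (by omega))

lemma pd_pathto (hm : 1 ≤ m) (h2 : 2 ≤ s + m) (hb : s + m ≤ n + 1) {e : ℕ}
    (he : e = n + s + m - 1) : IsPathFromTo (AA n) (pd n s m) (cc n s) (cc n e) := by
  subst he
  refine ⟨⟨?_, ?_, ?_⟩, pd_head hm, pd_last⟩
  · rw [pd]; simp
  · rw [pd, List.nodup_append]
    refine ⟨sp_nodup hb, List.nodup_singleton _, ?_⟩
    intro a ha b hb' hab
    simp only [List.mem_singleton] at hb'
    subst hb'
    subst hab
    have := sp_mem hb ha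
    rw [cval (by omega)] at this
    omega
  · rw [pd]; change List.IsChain _ _; rw [List.isChain_append]
    refine ⟨sp_chain hb, List.isChain_singleton _, ?_⟩
    intro x hx y hy
    rw [sp_last hm, Option.mem_def, Option.some_inj] at hx
    simp only [List.head?_cons, Option.mem_def, Option.some_inj] at hy
    subst hx; subst hy
    exact arc_cc (by omega) (by omega) (Or.inr (Or.inr ⟨by omega, by omega, by omega⟩))

lemma ep_of_head {l : List (Fin (2 * n + 1))} {w : Fin (2 * n + 1)} {k : ℕ}
    (h : l.head? = some (cc n k)) (hw : w.val = k) : IsEndpoint l w := by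
  rw [cc_eq_of_val hw]; exact Or.inl h

lemma ep_of_last {l : List (Fin (2 * n + 1))} {w : Fin (2 * n + 1)} {k : ℕ}
    (h : l.getLast? = some (cc n k)) (hw : w.val = k) : IsEndpoint l w := by
  rw [cc_eq_of_val hw]; exact Or.inr h

lemma intdisj_symm {p q : List (Fin (2 * n + 1))} (h : IntDisjoint p q) :
    IntDisjoint q p := fun w h1 h2 => ⟨(h w h2 h1).2, (h w h2 h1).1⟩

lemma emb_swap {A : Set (Fin (2 * n + 1) × Fin (2 * n + 1))} {p q a b c : Fin (2 * n + 1)}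
    (h : HasEmbedding A p q a b c) : HasEmbedding A p q b a c := by
  obtain ⟨hpq, P1, P2, P3, P4, k1, k2, k3, k4, d12, d13, d14, d23, d24, d34⟩ := h
  exact ⟨hpq, P2, P1, P3, P4, k2, k1, k3, k4, intdisj_symm d12, d23, d24, d13, d14, d34⟩

/-- Embedding for triplets `xy|z` with `z < x < y ≤ n`. -/
lemma embed1 (hn : 3 ≤ n) {x y z : ℕ} (hz : 1 ≤ z) (hzx : z < x) (hxy : x < y)
    (hy : y ≤ n) :
    HasEmbedding (AA n) (cc n z) (cc n x) (cc n (n + x)) (cc n (n + y)) (cc n (n + z)) := by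
  refine ⟨cc_ne (by omega) (by omega) (by omega), pd n x 1, pd n x (y - x + 1),
    sp n z (x - z + 1), pd n z 1, ?_, ?_, ?_, ?_, ?_, ?_, ?_, ?_, ?_, ?_⟩
  · exact pd_pathto (by omega) (by omega) (by omega) (by omega)
  · exact pd_pathto (by omega) (by omega) (by omega) (by omega)
  · exact sp_pathto (by omega) (by omega) (by omega)
  · exact pd_pathto (by omega) (by omega) (by omega) (by omega)
  · -- Pqx vs Pqy
    intro w h1 h2
    have m1 := pd_mem (by omega) (by omega) h1
    have m2 := pd_mem (by omega) (by omega) h2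
    have hw : w.val = x := by omega
    constructor
    · exact ep_of_head (pd_head (by omega)) hw
    · exact ep_of_head (pd_head (by omega)) hw
  · -- Pqx vs Ppq
    intro w h1 h2
    have m1 := pd_mem (by omega) (by omega) h1
    have m2 := sp_mem (by omega) h2
    have hw : w.val = x := by omega
    constructor
    · exact ep_of_head (pd_head (by omega)) hw
    · exact ep_of_last (sp_last (by omega)) (by omega)
  · -- Pqx vs Ppz
    intro w h1 h2
    have m1 := pd_mem (by omega) (by omega) h1
    have m2 := pd_mem (by omega) (by omega) h2
    omega
  · -- Pqy vs Ppq
    intro w h1 h2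
    have m1 := pd_mem (by omega) (by omega) h1
    have m2 := sp_mem (by omega) h2
    have hw : w.val = x := by omega
    constructor
    · exact ep_of_head (pd_head (by omega)) hw
    · exact ep_of_last (sp_last (by omega)) (by omega)
  · -- Pqy vs Ppz
    intro w h1 h2
    have m1 := pd_mem (by omega) (by omega) h1
    have m2 := pd_mem (by omega) (by omega) h2
    omega
  · -- Ppq vs Ppz
    intro w h1 h2
    have m1 := sp_mem (by omega) h1
    have m2 := pd_mem (by omega) (by omega) h2
    have hw : w.val = z := by omega
    constructor
    · exact ep_of_head (sp_head (by omega)) hw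
    · exact ep_of_head (pd_head (by omega)) hw

end Paths

/-! #### The second embedding and biconnectivity -/

section Bic

variable {n : ℕ}

/-- Embedding for triplets `a(a+1)|n` with `1 ≤ a ≤ n - 2`. -/
lemma embed2 (hn : 3 ≤ n) {a : ℕ} (h1 : 1 ≤ a) (h2 : a ≤ n - 2) :
    HasEmbedding (AA n) (cc n 0) (cc n a) (cc n (n + a)) (cc n (n + a + 1))
      (cc n (2 * n)) := by
  have hP4 : IsPathFromTo (AA n) [cc n 0, cc n n, cc n (2 * n)] (cc n 0) (cc n (2 * n)) := by
    refine ⟨⟨by simp, ?_, ?_⟩, rfl, by simp⟩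
    · simp only [List.nodup_cons, List.mem_cons, List.mem_singleton, List.not_mem_nil,
        or_false, List.nodup_nil, and_true, List.nodup_singleton]
      refine ⟨?_, ?_⟩
      · push_neg
        exact ⟨cc_ne (n := n) (j := 0) (k := n) (by omega) (by omega) (by omega),
          cc_ne (n := n) (j := 0) (k := 2 * n) (by omega) (by omega) (by omega)⟩
      · exact ⟨cc_ne (n := n) (j := n) (k := 2 * n) (by omega) (by omega) (by omega), not_false⟩
    · refine List.IsChain.cons_cons ?_ (List.IsChain.cons_cons ?_ (List.isChain_singleton _))
      · exact arc_cc (by omega) (by omega) (Or.inr (Or.inl ⟨rfl, rfl⟩))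
      · exact arc_cc (by omega) (by omega) (Or.inr (Or.inr ⟨by omega, le_rfl, by omega⟩))
  have hm4 : ∀ w : Fin (2 * n + 1), w ∈ [cc n 0, cc n n, cc n (2 * n)] →
      w.val = 0 ∨ w.val = n ∨ w.val = 2 * n := by
    intro w hw
    simp only [List.mem_cons, List.mem_singleton, List.not_mem_nil, or_false] at hw
    rcases hw with rfl | rfl | rfl
    · exact Or.inl (cval (by omega))
    · exact Or.inr (Or.inl (cval (by omega)))
    · exact Or.inr (Or.inr (cval (by omega)))
  refine ⟨cc_ne (by omega) (by omega) (by omega), pd n a 1, pd n a 2,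
    sp n 0 (a + 1), [cc n 0, cc n n, cc n (2 * n)], ?_, ?_, ?_, hP4, ?_, ?_, ?_, ?_, ?_, ?_⟩
  · exact pd_pathto (by omega) (by omega) (by omega) (by omega)
  · exact pd_pathto (by omega) (by omega) (by omega) (by omega)
  · exact sp_pathto (by omega) (by omega) (by omega)
  · -- Pqx vs Pqy
    intro w hw1 hw2
    have m1 := pd_mem (by omega) (by omega) hw1
    have m2 := pd_mem (by omega) (by omega) hw2
    have hw : w.val = a := by omega
    exact ⟨ep_of_head (pd_head (by omega)) hw, ep_of_head (pd_head (by omega)) hw⟩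
  · -- Pqx vs Ppq
    intro w hw1 hw2
    have m1 := pd_mem (by omega) (by omega) hw1
    have m2 := sp_mem (by omega) hw2
    have hw : w.val = a := by omega
    exact ⟨ep_of_head (pd_head (by omega)) hw, ep_of_last (sp_last (by omega)) (by omega)⟩
  · -- Pqx vs Ppz
    intro w hw1 hw2
    have m1 := pd_mem (by omega) (by omega) hw1
    have m2 := hm4 w hw2
    omega
  · -- Pqy vs Ppq
    intro w hw1 hw2
    have m1 := pd_mem (by omega) (by omega) hw1
    have m2 := sp_mem (by omega) hw2
    have hw : w.val = a := by omega
    exact ⟨ep_of_head (pd_head (by omega)) hw, ep_of_last (sp_last (by omega)) (by omega)⟩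
  · -- Pqy vs Ppz
    intro w hw1 hw2
    have m1 := pd_mem (by omega) (by omega) hw1
    have m2 := hm4 w hw2
    omega
  · -- Ppq vs Ppz
    intro w hw1 hw2
    have m1 := sp_mem (by omega) hw1
    have m2 := hm4 w hw2
    have hw : w.val = 0 := by omega
    exact ⟨ep_of_head (sp_head (by omega)) hw, ep_of_head rfl hw⟩

/-- The vertex set of the unique nontrivial biconnected component (the cycle). -/
def C0 (n : ℕ) : Set (Fin (2 * n + 1)) := {v | v.val ≤ n}

lemma rel_symm (S : Set (Fin (2 * n + 1))) :
    Symmetric (fun a b => a ∈ S ∧ b ∈ S ∧ UAdj (AA n) a b) :=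
  fun _ _ ⟨h1, h2, h3⟩ => ⟨h2, h1, h3.symm⟩

lemma spine_conn (hn : 3 ≤ n) (S : Set (Fin (2 * n + 1))) :
    ∀ j i : ℕ, i ≤ j → j ≤ n → (∀ k, i ≤ k → k ≤ j → cc n k ∈ S) →
      Relation.ReflTransGen (fun a b => a ∈ S ∧ b ∈ S ∧ UAdj (AA n) a b)
        (cc n i) (cc n j) := by
  intro j
  induction j with
  | zero =>
    intro i h1 _ _
    obtain rfl : i = 0 := by omega
    exact Relation.ReflTransGen.refl
  | succ m ih =>
    intro i h1 h2 hmem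
    rcases Nat.eq_or_lt_of_le h1 with rfl | hlt
    · exact Relation.ReflTransGen.refl
    · refine Relation.ReflTransGen.tail
        (ih i (by omega) (by omega) (fun k hk1 hk2 => hmem k hk1 (by omega))) ?_
      exact ⟨hmem m (by omega) (by omega), hmem (m + 1) (by omega) le_rfl,
        Or.inl (arc_cc (by omega) (by omega) (Or.inl ⟨by omega, rfl⟩))⟩

lemma mem_C0 {k : ℕ} (hk : k ≤ n) : cc n k ∈ C0 n := by
  show (cc n k).val ≤ n
  rw [cval (by omega)]
  exact hk

lemma connC0 (hn : 3 ≤ n) : ConnWithin (AA n) (C0 n) := by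
  intro u hu v hv
  have hsym : Symmetric (Relation.ReflTransGen (fun a b => a ∈ C0 n ∧ b ∈ C0 n ∧ UAdj (AA n) a b)) := fun x y => @Std.Symm.symm _ _ (@Relation.ReflTransGen.stdSymm _ _ (Std.Symm.mk (rel_symm (n := n) (C0 n)))) x y
  have hu' : u.val ≤ n := hu
  have hv' : v.val ≤ n := hv
  have h1 := spine_conn hn (C0 n) u.val 0 (Nat.zero_le _) hu'
    (fun k _ hk2 => mem_C0 (le_trans hk2 hu'))
  have h2 := spine_conn hn (C0 n) v.val 0 (Nat.zero_le _) hv'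
    (fun k _ hk2 => mem_C0 (le_trans hk2 hv'))
  have := Relation.ReflTransGen.trans (hsym h1) h2
  rwa [← veq u, ← veq v] at this

lemma connC0del (hn : 3 ≤ n) (w : Fin (2 * n + 1)) : ConnWithin (AA n) (C0 n \ {w}) := by
  have hmem : ∀ k, k ≤ n → k ≠ w.val → cc n k ∈ C0 n \ {w} := by
    intro k hk hk2
    refine ⟨mem_C0 hk, ?_⟩
    simp only [Set.mem_singleton_iff]
    intro h
    exact hk2 (by rw [← h, cval (by omega)])
  have hsym : Symmetric (Relation.ReflTransGen (fun a b => a ∈ C0 n \ {w} ∧ b ∈ C0 n \ {w} ∧ UAdj (AA n) a b)) := fun x y => @Std.Symm.symm _ _ (@Relation.ReflTransGen.stdSymm _ _ (Std.Symm.mk (rel_symm (n := n) (C0 n \ {w})))) x y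
  have key : ∀ u v : Fin (2 * n + 1), u ∈ C0 n \ {w} → v ∈ C0 n \ {w} →
      u.val ≤ v.val →
      Relation.ReflTransGen (fun a b => a ∈ C0 n \ {w} ∧ b ∈ C0 n \ {w} ∧ UAdj (AA n) a b)
        u v := by
    intro u v hu hv hle
    have hun : u.val ≤ n := hu.1
    have hvn : v.val ≤ n := hv.1
    have huw : u.val ≠ w.val := fun h => hu.2 (Fin.ext h)
    have hvw : v.val ≠ w.val := fun h => hv.2 (Fin.ext h)
    rcases Nat.lt_or_ge v.val w.val with hcase | hcase
    · have := spine_conn hn (C0 n \ {w}) v.val u.val hle hvn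
        (fun k hk1 hk2 => hmem k (by omega) (by omega))
      rwa [← veq u, ← veq v] at this
    rcases Nat.lt_or_ge w.val u.val with hcase2 | hcase2
    · have := spine_conn hn (C0 n \ {w}) v.val u.val hle hvn
        (fun k hk1 hk2 => hmem k (by omega) (by omega))
      rwa [← veq u, ← veq v] at this
    · -- u.val < w.val < v.val
      have hu' : u.val < w.val := by omega
      have hv' : w.val < v.val := by omega
      have s1 := hsym (spine_conn hn (C0 n \ {w}) u.val 0 (Nat.zero_le _) hun
        (fun k hk1 hk2 => hmem k (by omega) (by omega)))
      have s2 : Relation.ReflTransGen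
          (fun a b => a ∈ C0 n \ {w} ∧ b ∈ C0 n \ {w} ∧ UAdj (AA n) a b)
          (cc n 0) (cc n n) :=
        Relation.ReflTransGen.single
          ⟨hmem 0 (by omega) (by omega), hmem n le_rfl (by omega),
            Or.inl (arc_cc (by omega) (by omega) (Or.inr (Or.inl ⟨rfl, rfl⟩)))⟩
      have s3 := hsym (spine_conn hn (C0 n \ {w}) n v.val (by omega) le_rfl
        (fun k hk1 hk2 => hmem k (by omega) (by omega)))
      have := Relation.ReflTransGen.trans (Relation.ReflTransGen.trans s1 s2) s3
      rwa [← veq u, ← veq v] at this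
  intro u hu v hv
  rcases Nat.le_total u.val v.val with h | h
  · exact key u v hu hv h
  · exact hsym (key v u hv hu h)

lemma C0_bic (hn : 3 ≤ n) : Biconnected (AA n) (C0 n) := by
  refine ⟨?_, connC0 hn, fun w _ => connC0del hn w⟩
  have : (1 : ℕ) < (C0 n).ncard := by
    refine (Set.one_lt_ncard_iff (Set.toFinite _)).2
      ⟨cc n 0, cc n 1, mem_C0 (by omega), mem_C0 (by omega),
        cc_ne (by omega) (by omega) (by omega)⟩
  omega

lemma bic_leafless (hn : 3 ≤ n) {S : Set (Fin (2 * n + 1))}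
    (hS : Biconnected (AA n) S) (h3 : 3 ≤ S.ncard) : S ⊆ C0 n := by
  intro v hv
  by_contra hvC
  have hval : n + 1 ≤ v.val := by
    simp only [C0, Set.mem_setOf_eq] at hvC
    omega
  obtain ⟨hcard, hconn, hdel⟩ := hS
  have huniq : ∀ u, UAdj (AA n) v u → u = cc n (v.val - n) := by
    intro u h
    rcases h with h | h
    · have h' : u ∈ {w | (v, w) ∈ AA n} := h
      rw [succ_leaf hn hval] at h'
      exact absurd h' (Set.notMem_empty u)
    · have h' : u ∈ {u | (u, v) ∈ AA n} := h
      rw [pred_leaf hn hval] at h'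
      exact h'
  obtain ⟨u, hu, huv⟩ := Set.exists_ne_of_one_lt_ncard (s := S) (by omega) v
  rcases (hconn v hv u hu).cases_head with h | ⟨c, ⟨_, hcS, hadj⟩, _⟩
  · exact huv h.symm
  have hcv : c = cc n (v.val - n) := huniq c hadj
  have hvc : v ≠ c := by
    intro h
    rw [← h] at hadj
    rcases hadj with h' | h' <;> exact absurd (arc_lt hn h') (lt_irrefl _)
  have hvS' : v ∈ S \ {c} := ⟨hv, by simpa using hvc⟩
  have hc2 : 1 < (S \ {c}).ncard := by
    have hdiff : (S \ {c}).ncard + 1 = S.ncard :=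
      Set.ncard_diff_singleton_add_one hcS (Set.toFinite S)
    omega
  obtain ⟨u', hu', hu'v⟩ := Set.exists_ne_of_one_lt_ncard (s := S \ {c}) hc2 v
  rcases ((hdel c hcS) v hvS' u' hu').cases_head with h | ⟨c', ⟨_, hc'S, hadj'⟩, _⟩
  · exact hu'v h.symm
  have hcc : c' = cc n (v.val - n) := huniq c' hadj'
  exact hc'S.2 (show c' ∈ ({c} : Set _) by rw [Set.mem_singleton_iff, hcc, hcv])

lemma AA_bicomp_out (hn : 3 ≤ n) :
    ∀ S, BiconnComp (AA n) S → S.ncard ≠ 2 → 3 ≤ (outArcs (AA n) S).ncard := by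
  intro S hS hc2
  have h3 : 3 ≤ S.ncard := by
    have := hS.1.1
    omega
  have hsub : S ⊆ C0 n := bic_leafless hn hS.1 h3
  have hCS : C0 n = S := hS.2 (C0 n) (C0_bic hn) hsub
  rw [← hCS]
  have himg : outArcs (AA n) (C0 n) =
      (fun i => (cc n i, cc n (n + i))) '' ↑(Finset.Icc 1 n) := by
    ext p
    constructor
    · rintro ⟨hA, h1, h2⟩
      have h1' : p.1.val ≤ n := h1
      have h2' : ¬ p.2.val ≤ n := h2
      have harc : Arc n p.1.val p.2.val := hA
      have hp2 := p.2.isLt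
      have hval : p.2.val = n + p.1.val ∧ 1 ≤ p.1.val ∧ p.1.val ≤ n := by
        rcases harc with ⟨ha, hb⟩ | ⟨ha, hb⟩ | ⟨ha, hb, hc⟩ <;> omega
      refine ⟨p.1.val, ?_, ?_⟩
      · simp only [Finset.coe_Icc, Set.mem_Icc]
        omega
      · exact Prod.ext_iff.2 ⟨(veq p.1).symm, (cc_eq_of_val hval.1).symm⟩
    · rintro ⟨i, hi, rfl⟩
      simp only [Finset.coe_Icc, Set.mem_Icc] at hi
      refine ⟨arc_cc (i := i) (j := n + i) (by omega) (by omega)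
        (Or.inr (Or.inr ⟨by omega, by omega, rfl⟩)), ?_, ?_⟩
      · exact mem_C0 (by omega)
      · show ¬ (cc n (n + i)).val ≤ n
        rw [cval (by omega)]
        omega
  rw [himg, Set.ncard_image_of_injOn, Set.ncard_coe_finset, Nat.card_Icc]
  · omega
  · intro i hi j hj hij
    simp only [Finset.coe_Icc, Set.mem_Icc] at hi hj
    have := congrArg (fun p : Fin (2 * n + 1) × Fin (2 * n + 1) => p.1.val) hij
    simpa only [cval (show i ≤ 2 * n by omega), cval (show j ≤ 2 * n by omega)] using this

end Bic

/-! #### The network and the main theorem -/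

section Assemble

variable {n : ℕ}

/-- The level-1 network of Section 2 with a single reticulation. -/
noncomputable def Net (n : ℕ) (hn : 3 ≤ n) : PhyloNetwork (Fin (2 * n + 1)) ℕ where
  vfin := inferInstance
  arcs := AA n
  lab := fun v => v.val - n
  acyclic := AA_acyclic hn
  root_ex := ⟨cc n 0, (isroot_iff hn _).2 (cval (by omega))⟩
  root_unique := fun r r' h h' => by
    rw [isroot_iff hn] at h h'
    exact Fin.ext (by rw [h, h'])
  vertex_type := fun v => by
    have hv := v.isLt
    rcases Nat.lt_or_ge v.val 1 with h | h
    · exact Or.inl ((isroot_iff hn v).2 (by omega))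
    rcases Nat.lt_or_ge v.val n with h2 | h2
    · refine Or.inr (Or.inl ⟨?_, ?_⟩)
      · rw [indeg, pred_mid hn h (by omega)]
        simp
      · rw [outdeg, succ_mid hn h (by omega)]
        exact Set.ncard_pair (cc_ne (by omega) (by omega) (by omega))
    rcases Nat.lt_or_ge v.val (n + 1) with h3 | h3
    · exact Or.inr (Or.inr (Or.inl ((isretic_iff hn v).2 (by omega))))
    · exact Or.inr (Or.inr (Or.inr ((isleaf_iff hn v).2 h3)))
  lab_inj := fun u v hu hv he => by
    rw [isleaf_iff hn] at hu hv
    have hu' := u.isLt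
    have hv' := v.isLt
    have he' : u.val - n = v.val - n := he
    exact Fin.ext (by omega)
  bicomp_out := AA_bicomp_out hn

lemma tl_sub (hn : 3 ≤ n) {x : ℕ} (hx : x ∈ tripletLeaves (exampleT n)) :
    1 ≤ x ∧ x ≤ n := by
  obtain ⟨t, ht, hor⟩ := hx
  rcases ht with ht | ht
  · obtain ⟨h1, h2, h3, h4, h5, h6, _, _, _⟩ := ht
    rcases hor with rfl | rfl | rfl <;> omega
  · obtain ⟨a, _, h1, h2, rfl⟩ := ht
    rcases hor with h | h | h
    · have hx : x = a := h
      exact ⟨by omega, by omega⟩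
    · have hx : x = a + 1 := h
      exact ⟨by omega, by omega⟩
    · have hx : x = n := h
      exact ⟨by omega, by omega⟩

lemma tl_mem (hn : 3 ≤ n) {x : ℕ} (h1 : 1 ≤ x) (h2 : x ≤ n) :
    x ∈ tripletLeaves (exampleT n) := by
  have h231 : (2, 3, 1) ∈ exampleT n := Or.inl
    (show 1 ≤ 2 ∧ 2 ≤ n ∧ 1 ≤ 3 ∧ 3 ≤ n ∧ 1 ≤ 1 ∧ 1 ≤ n ∧ 2 ≠ 3 ∧ 1 < 2 ∧ 1 < 3 by omega)
  rcases Nat.lt_or_ge x 2 with h | h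
  · exact ⟨(2, 3, 1), h231, Or.inr (Or.inr (show x = 1 by omega))⟩
  rcases Nat.lt_or_ge x 3 with h' | h'
  · exact ⟨(2, 3, 1), h231, Or.inl (show x = 2 by omega)⟩
  · refine ⟨(x, 2, 1), Or.inl (show 1 ≤ x ∧ x ≤ n ∧ 1 ≤ 2 ∧ 2 ≤ n ∧ 1 ≤ 1 ∧ 1 ≤ n ∧
      x ≠ 2 ∧ 1 < x ∧ 1 < 2 by omega), Or.inl rfl⟩

lemma dense_exampleT (hn : 3 ≤ n) : DenseT (exampleT n) := by
  intro x hx y hy z hz hxy hxz hyz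
  obtain ⟨hx1, hx2⟩ := tl_sub hn hx
  obtain ⟨hy1, hy2⟩ := tl_sub hn hy
  obtain ⟨hz1, hz2⟩ := tl_sub hn hz
  rcases show (z < x ∧ z < y) ∨ (y < x ∧ y < z) ∨ (x < y ∧ x < z) by omega with h | h | h
  · exact Or.inl (Or.inl ⟨hx1, hx2, hy1, hy2, hz1, hz2, hxy, h.1, h.2⟩)
  · exact Or.inr (Or.inl (Or.inl ⟨hx1, hx2, hz1, hz2, hy1, hy2, hxz, h.1, h.2⟩))
  · exact Or.inr (Or.inr (Or.inl ⟨hy1, hy2, hz1, hz2, hx1, hx2, hyz, h.1, h.2⟩))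

lemma net_consistent (hn : 3 ≤ n) : ConsistentSet (Net n hn) (exampleT n) := by
  rintro ⟨x, y, z⟩ ht
  have harcs : (Net n hn).arcs = AA n := rfl
  rcases ht with ht | ht
  · obtain ⟨h1, h2, h3, h4, h5, h6, h7, h8, h9⟩ :
        1 ≤ x ∧ x ≤ n ∧ 1 ≤ y ∧ y ≤ n ∧ 1 ≤ z ∧ z ≤ n ∧ x ≠ y ∧ z < x ∧ z < y := ht
    refine ⟨cc n (n + x), cc n (n + y), cc n (n + z), ?_, ?_, ?_, ?_, ?_, ?_, ?_, ?_, ?_, ?_⟩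
    · rw [harcs, isleaf_iff hn, cval (by omega)]; omega
    · rw [harcs, isleaf_iff hn, cval (by omega)]; omega
    · rw [harcs, isleaf_iff hn, cval (by omega)]; omega
    · show (cc n (n + x)).val - n = x
      rw [cval (by omega)]; omega
    · show (cc n (n + y)).val - n = y
      rw [cval (by omega)]; omega
    · show (cc n (n + z)).val - n = z
      rw [cval (by omega)]; omega
    · exact cc_ne (by omega) (by omega) (by omega)
    · exact cc_ne (by omega) (by omega) (by omega)
    · exact cc_ne (by omega) (by omega) (by omega)
    · rcases Nat.lt_or_ge x y with hxy | hxy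
      · exact ⟨cc n z, cc n x, embed1 hn (by omega) (by omega) hxy (by omega)⟩
      · have hyx : y < x := by omega
        exact ⟨cc n z, cc n y, emb_swap (embed1 hn (by omega) (by omega) hyx (by omega))⟩
  · obtain ⟨a, _, ha1, ha2, heq⟩ := ht
    have hx : x = a := congrArg Prod.fst heq
    have hy : y = a + 1 := congrArg (fun t => t.2.1) heq
    have hz : z = n := congrArg (fun t => t.2.2) heq
    rw [hx, hy, hz]
    refine ⟨cc n (n + a), cc n (n + (a + 1)), cc n (2 * n), ?_, ?_, ?_, ?_, ?_, ?_, ?_, ?_, ?_, ?_⟩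
    · rw [harcs, isleaf_iff hn, cval (by omega)]; omega
    · rw [harcs, isleaf_iff hn, cval (by omega)]; omega
    · rw [harcs, isleaf_iff hn, cval (by omega)]; omega
    · show (cc n (n + a)).val - n = a
      rw [cval (by omega)]; omega
    · show (cc n (n + (a + 1))).val - n = a + 1
      rw [cval (by omega)]; omega
    · show (cc n (2 * n)).val - n = n
      rw [cval (by omega)]; omega
    · exact cc_ne (by omega) (by omega) (by omega)
    · exact cc_ne (by omega) (by omega) (by omega)
    · exact cc_ne (by omega) (by omega) (by omega)
    · have hemb := embed2 hn ha1 ha2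
      have : n + a + 1 = n + (a + 1) := by omega
      rw [this] at hemb
      exact ⟨cc n 0, cc n a, hemb⟩

lemma net_leafSet (hn : 3 ≤ n) : leafSet (Net n hn) = tripletLeaves (exampleT n) := by
  ext x
  constructor
  · rintro ⟨v, hleaf, rfl⟩
    have hv : n + 1 ≤ v.val := (isleaf_iff hn v).1 hleaf
    have hv' := v.isLt
    exact tl_mem hn (by show 1 ≤ v.val - n; omega) (by show v.val - n ≤ n; omega)
  · intro hx
    obtain ⟨h1, h2⟩ := tl_sub hn hx
    refine ⟨cc n (n + x), ?_, ?_⟩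
    · show IsLeafV (AA n) _
      rw [isleaf_iff hn, cval (by omega)]
      omega
    · show (cc n (n + x)).val - n = x
      rw [cval (by omega)]
      omega

lemma net_level (hn : 3 ≤ n) : IsLevel (Net n hn) 1 := by
  intro S hS
  have hsub : {v ∈ S | IsRetic (Net n hn).arcs v} ⊆ {cc n n} := by
    rintro v ⟨_, hr⟩
    rw [Set.mem_singleton_iff]
    exact cc_eq_of_val ((isretic_iff hn v).1 hr)
  calc {v ∈ S | IsRetic (Net n hn).arcs v}.ncard
      ≤ ({cc n n} : Set _).ncard := Set.ncard_le_ncard hsub (Set.finite_singleton _)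
    _ = 1 := Set.ncard_singleton _

lemma net_numRetic (hn : 3 ≤ n) : numRetic (Net n hn) = 1 := by
  have : {v | IsRetic (Net n hn).arcs v} = {cc n n} := by
    ext v
    rw [Set.mem_setOf_eq, Set.mem_singleton_iff]
    constructor
    · intro h
      exact cc_eq_of_val ((isretic_iff hn v).1 h)
    · rintro rfl
      exact (isretic_iff hn _).2 (cval (by omega))
  rw [numRetic, this, Set.ncard_singleton]

end Assemble

/-- For odd `n ≥ 3` the above triplet set is dense and there is a
level-1 network consistent with it containing exactly one reticulation vertex. -/
theorem example_one_reticulation (n : ℕ) (hodd : Odd n) (h3 : 3 ≤ n) :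
    DenseT (exampleT n) ∧
    ∃ (V : Type) (N : PhyloNetwork V ℕ),
      IsLevel N 1 ∧ ConsistentSet N (exampleT n) ∧
      leafSet N = tripletLeaves (exampleT n) ∧ numRetic N = 1 := by
  refine ⟨dense_exampleT h3, Fin (2 * n + 1), Net n h3, net_level h3, net_consistent h3,
    net_leafSet h3, net_numRetic h3⟩

end Phylo
end

section
/- Let N be a simple network with root r (i.e., N contains at least one reticulation vertex and every cut-arc of N is trivial), and suppose S is an SN-set of T(N) with 1 < |S| < |L(N)|. Then there exists an in-out root embedding in N: that is, there exist leaves x, z ∈ S and y ∉ S and an embedding of the triplet xz|y in N whose summit is r, i.e., a vertex q ≠ r and paths q→x, q→z, r→q, r→y that are pairwise vertex-disjoint except at their endpoints. -/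
/-!
Common definitions for formalizing "Constructing the Simplest Possible
Phylogenetic Network from Triplets" (van Iersel, Kelk).

A directed graph on a vertex type `V` is given by its arc set `A : Set (V × V)`.
-/

namespace Phylo

variable {V L : Type}

section ListAux
variable {α : Type}

def arcsOf (l : List α) : List (α × α) := l.zip l.tail

lemma arcsOf_cons_cons (a b : α) (t : List α) :
    arcsOf (a :: b :: t) = (a, b) :: arcsOf (b :: t) := rfl

lemma fst_mem_of_mem_arcsOf {l : List α} {e : α × α} (h : e ∈ arcsOf l) : e.1 ∈ l :=
  (List.of_mem_zip h).1

lemma snd_mem_tail_of_mem_arcsOf {l : List α} {e : α × α} (h : e ∈ arcsOf l) : e.2 ∈ l.tail :=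
  (List.of_mem_zip h).2

lemma snd_mem_of_mem_arcsOf {l : List α} {e : α × α} (h : e ∈ arcsOf l) : e.2 ∈ l :=
  List.mem_of_mem_tail (snd_mem_tail_of_mem_arcsOf h)

lemma mem_of_mem_arcsOf {l : List α} {e : α × α} (h : e ∈ arcsOf l) : e.1 ∈ l ∧ e.2 ∈ l :=
  ⟨fst_mem_of_mem_arcsOf h, snd_mem_of_mem_arcsOf h⟩

lemma chain'_iff_arcsOf {R : α → α → Prop} : ∀ {l : List α},
    l.Chain' R ↔ ∀ e ∈ arcsOf l, R e.1 e.2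
  | [] => by simp [arcsOf, List.Chain']
  | [a] => by simp [arcsOf, List.Chain']
  | a :: b :: t => by
    simp only [List.Chain']; rw [List.isChain_cons_cons, arcsOf_cons_cons]
    constructor
    · rintro ⟨hab, h⟩ e he
      rcases List.mem_cons.1 he with rfl | he
      · exact hab
      · exact chain'_iff_arcsOf.1 h e he
    · intro h
      exact ⟨h _ (List.mem_cons_self),
        chain'_iff_arcsOf.2 fun e he => h e (List.mem_cons_of_mem _ he)⟩

lemma exists_last_mem_split {M : Set α} : ∀ {l : List α}, (∃ x ∈ l, x ∈ M) →
    ∃ l₁ w l₂, l = l₁ ++ w :: l₂ ∧ w ∈ M ∧ ∀ x ∈ l₂, x ∉ M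
  | [], h => by simp at h
  | a :: t, h => by
    by_cases ht : ∃ x ∈ t, x ∈ M
    · obtain ⟨l₁, w, l₂, rfl, hw, hcl⟩ := exists_last_mem_split ht
      exact ⟨a :: l₁, w, l₂, rfl, hw, hcl⟩
    · refine ⟨[], a, t, rfl, ?_, fun x hx hxM => ht ⟨x, hx, hxM⟩⟩
      obtain ⟨x, hx, hxM⟩ := h
      rcases List.mem_cons.1 hx with rfl | hx
      · exact hxM
      · exact absurd ⟨x, hx, hxM⟩ ht

lemma exists_first_mem_split {M : Set α} : ∀ {l : List α}, (∃ x ∈ l, x ∈ M) →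
    ∃ l₁ w l₂, l = l₁ ++ w :: l₂ ∧ w ∈ M ∧ ∀ x ∈ l₁, x ∉ M
  | [], h => by simp at h
  | a :: t, h => by
    by_cases ha : a ∈ M
    · exact ⟨[], a, t, rfl, ha, by simp⟩
    · have ht : ∃ x ∈ t, x ∈ M := by
        obtain ⟨x, hx, hxM⟩ := h
        rcases List.mem_cons.1 hx with rfl | hx
        · exact absurd hxM ha
        · exact ⟨x, hx, hxM⟩
      obtain ⟨l₁, w, l₂, rfl, hw, hcl⟩ := exists_first_mem_split ht
      refine ⟨a :: l₁, w, l₂, rfl, hw, ?_⟩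
      intro x hx
      rcases List.mem_cons.1 hx with rfl | hx
      · exact ha
      · exact hcl x hx

lemma exists_cross_pair {Z : Set α} : ∀ {l : List α} {a b : α},
    l.head? = some a → a ∈ Z → l.getLast? = some b → b ∉ Z →
    ∃ e ∈ arcsOf l, e.1 ∈ Z ∧ e.2 ∉ Z
  | [], a, b, hh, _, _, _ => by simp at hh
  | [x], a, b, hh, ha, hl, hb => by
    simp at hh hl; subst hh; subst hl; exact absurd ha hb
  | x :: y :: t, a, b, hh, ha, hl, hb => by
    simp at hh; subst hh
    by_cases hy : y ∈ Z
    · obtain ⟨e, he, h1, h2⟩ := exists_cross_pair (l := y :: t) rfl hy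
        (by simpa [List.getLast?_cons_cons] using hl) hb
      exact ⟨e, by rw [arcsOf_cons_cons]; exact List.mem_cons_of_mem _ he, h1, h2⟩
    · exact ⟨(x, y), by rw [arcsOf_cons_cons]; exact List.mem_cons_self, ha, hy⟩

lemma mem_imp_head_mem_of_back_closed {Z : Set α} : ∀ {l : List α},
    (∀ e ∈ arcsOf l, e.2 ∈ Z → e.1 ∈ Z) → ∀ {c : α}, c ∈ l → c ∈ Z →
    ∀ {a : α}, l.head? = some a → a ∈ Z
  | [], _, c, hc, _, _, _ => by simp at hc
  | x :: t, hb, c, hc, hcZ, a, hh => by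
    simp at hh; subst hh
    rcases List.mem_cons.1 hc with rfl | hc
    · exact hcZ
    · match t, hc with
      | y :: t', hc =>
        have hy : y ∈ Z := mem_imp_head_mem_of_back_closed
          (fun e he => hb e (by rw [arcsOf_cons_cons]; exact List.mem_cons_of_mem _ he)) hc hcZ rfl
        exact hb (x, y) (by rw [arcsOf_cons_cons]; exact List.mem_cons_self) hy

lemma unique_cross_pair {Z : Set α} : ∀ {l : List α},
    (∀ e ∈ arcsOf l, e.2 ∈ Z → e.1 ∈ Z) →
    ∀ {e e' : α × α}, e ∈ arcsOf l → e.1 ∈ Z → e.2 ∉ Z →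
    e' ∈ arcsOf l → e'.1 ∈ Z → e'.2 ∉ Z → e = e'
  | [], _, e, e', he, _, _, _, _, _ => by simp [arcsOf] at he
  | [x], _, e, e', he, _, _, _, _, _ => by simp [arcsOf] at he
  | x :: y :: t, hb, e, e', he, he1, he2, he', he'1, he'2 => by
    rw [arcsOf_cons_cons] at he he'
    have hbt : ∀ e ∈ arcsOf (y :: t), e.2 ∈ Z → e.1 ∈ Z :=
      fun e h => hb e (by rw [arcsOf_cons_cons]; exact List.mem_cons_of_mem _ h)
    rcases List.mem_cons.1 he with rfl | he <;> rcases List.mem_cons.1 he' with h' | he'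
    · rw [h']
    · -- e = (x,y), y ∉ Z, but e' ∈ arcsOf (y::t) with e'.1 ∈ Z
      have : y ∈ Z := mem_imp_head_mem_of_back_closed hbt (mem_of_mem_arcsOf he').1 he'1 rfl
      exact absurd this he2
    · subst h'
      have : y ∈ Z := mem_imp_head_mem_of_back_closed hbt (mem_of_mem_arcsOf he).1 he1 rfl
      exact absurd this he'2
    · exact unique_cross_pair hbt he he1 he2 he' he'1 he'2

lemma nodup_unique_out : ∀ {l : List α}, l.Nodup → ∀ {a b b' : α},
    (a, b) ∈ arcsOf l → (a, b') ∈ arcsOf l → b = b'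
  | [], _, a, b, b', h, _ => by simp [arcsOf] at h
  | [x], _, a, b, b', h, _ => by simp [arcsOf] at h
  | x :: y :: t, hnd, a, b, b', h, h' => by
    rw [arcsOf_cons_cons] at h h'
    have hnd' : (y :: t).Nodup := hnd.of_cons
    rcases List.mem_cons.1 h with h | h <;> rcases List.mem_cons.1 h' with h' | h'
    · rw [Prod.mk.injEq] at h h'; rw [h.2, h'.2]
    · exfalso
      rw [Prod.mk.injEq] at h
      have : a ∈ y :: t := (mem_of_mem_arcsOf h').1
      rw [← h.1] at hnd
      exact (List.nodup_cons.1 hnd).1 this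
    · exfalso
      rw [Prod.mk.injEq] at h'
      have : a ∈ y :: t := (mem_of_mem_arcsOf h).1
      rw [← h'.1] at hnd
      exact (List.nodup_cons.1 hnd).1 this
    · exact nodup_unique_out hnd' h h'

lemma nodup_unique_in : ∀ {l : List α}, l.Nodup → ∀ {a a' b : α},
    (a, b) ∈ arcsOf l → (a', b) ∈ arcsOf l → a = a'
  | [], _, a, a', b, h, _ => by simp [arcsOf] at h
  | [x], _, a, a', b, h, _ => by simp [arcsOf] at h
  | x :: y :: t, hnd, a, a', b, h, h' => by
    rw [arcsOf_cons_cons] at h h'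
    have hnd' : (y :: t).Nodup := hnd.of_cons
    rcases List.mem_cons.1 h with h | h <;> rcases List.mem_cons.1 h' with h' | h'
    · rw [Prod.mk.injEq] at h h'; rw [h.1, h'.1]
    · exfalso
      rw [Prod.mk.injEq] at h
      have hb : b ∈ t := snd_mem_tail_of_mem_arcsOf h'
      rw [← h.2] at hnd'
      exact (List.nodup_cons.1 hnd').1 hb
    · exfalso
      rw [Prod.mk.injEq] at h'
      have hb : b ∈ t := snd_mem_tail_of_mem_arcsOf h
      rw [← h'.2] at hnd'
      exact (List.nodup_cons.1 hnd').1 hb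
    · exact nodup_unique_in hnd' h h'

end ListAux

section PathAux
variable {A : Set (V × V)} {p q : List V} {u v w : V}

lemma mem_arcsOf_cons {m : List V} {e : V × V} (h : e ∈ arcsOf m) (a : V) :
    e ∈ arcsOf (a :: m) := by
  match m with
  | [] => simp [arcsOf] at h
  | b :: t => rw [arcsOf_cons_cons]; exact List.mem_cons_of_mem _ h

lemma mem_arcsOf_append_right {l m : List V} {e : V × V} (h : e ∈ arcsOf m) :
    e ∈ arcsOf (l ++ m) := by
  induction l with
  | nil => simpa using h
  | cons a l ih => exact mem_arcsOf_cons ih a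

lemma mem_arcsOf_append_left : ∀ {l : List V} (m : List V) {e : V × V},
    e ∈ arcsOf l → e ∈ arcsOf (l ++ m)
  | [], m, e, h => by simp [arcsOf] at h
  | [a], m, e, h => by simp [arcsOf] at h
  | a :: b :: t, m, e, h => by
    rw [arcsOf_cons_cons] at h
    rw [List.cons_append, List.cons_append, arcsOf_cons_cons]
    rcases List.mem_cons.1 h with rfl | h
    · exact List.mem_cons_self
    · exact List.mem_cons_of_mem _ (mem_arcsOf_append_left m h)

lemma mem_arcsOf_junction (l₁ : List V) (x : V) (l₂ : List V) (h : l₁ ≠ []) (hl : l₁.getLast h = w) :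
    (w, x) ∈ arcsOf (l₁ ++ x :: l₂) := by
  induction l₁ with
  | nil => exact absurd rfl h
  | cons a t ih =>
    match t with
    | [] =>
      simp at hl; subst hl
      rw [List.cons_append, List.nil_append, arcsOf_cons_cons]
      exact List.mem_cons_self
    | b :: t' =>
      rw [List.getLast_cons (by simp)] at hl
      have := ih (by simp) hl
      rw [List.cons_append]
      exact mem_arcsOf_cons this a

lemma exists_split_of_mem_arcsOf : ∀ {l : List V} {e : V × V}, e ∈ arcsOf l →
    ∃ l₁ l₂, l = l₁ ++ e.1 :: e.2 :: l₂
  | [], e, h => by simp [arcsOf] at h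
  | [a], e, h => by simp [arcsOf] at h
  | a :: b :: t, e, h => by
    rw [arcsOf_cons_cons] at h
    rcases List.mem_cons.1 h with rfl | h
    · exact ⟨[], t, rfl⟩
    · obtain ⟨l₁, l₂, hl⟩ := exists_split_of_mem_arcsOf h
      exact ⟨a :: l₁, l₂, by rw [List.cons_append, ← hl]⟩

lemma IsPathFromTo.nonempty (h : IsPathFromTo A p u v) : p ≠ [] := h.1.1

lemma IsPathFromTo.nodup (h : IsPathFromTo A p u v) : p.Nodup := h.1.2.1

lemma IsPathFromTo.arc_mem {e : V × V} (h : IsPathFromTo A p u v) (he : e ∈ arcsOf p) : e ∈ A :=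
  chain'_iff_arcsOf.1 h.1.2.2 e he

lemma IsPathFromTo.head_mem (h : IsPathFromTo A p u v) : u ∈ p := by
  have := h.2.1
  match p, this with
  | a :: t, hh => simp at hh; subst hh; exact List.mem_cons_self

lemma mem_of_getLast?' : ∀ {l : List V} {a : V}, l.getLast? = some a → a ∈ l
  | [], a, h => by simp at h
  | [b], a, h => by simp at h; simp [h]
  | b :: c :: t, a, h => by
    rw [List.getLast?_cons_cons] at h
    exact List.mem_cons_of_mem _ (mem_of_getLast?' h)

lemma IsPathFromTo.last_mem (h : IsPathFromTo A p u v) : v ∈ p :=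
  mem_of_getLast?' h.2.2

lemma IsPathFromTo.cons_struct (h : IsPathFromTo A p u v) : ∃ t, p = u :: t := by
  have := h.2.1
  match p, this with
  | a :: t, hh => simp at hh; subst hh; exact ⟨t, rfl⟩

lemma singleton_path (hu : u = v) : IsPathFromTo A [u] u v :=
  ⟨⟨by simp, by simp, by simp [List.Chain']⟩, by simp, by simp [hu]⟩

lemma split_path (h : IsPathFromTo A p u v) {l₁ l₂ : List V}
    (hs : p = l₁ ++ w :: l₂) :
    IsPathFromTo A (l₁ ++ [w]) u w ∧ IsPathFromTo A (w :: l₂) w v ∧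
      (∀ x, x ∈ l₁ ++ [w] → x ∈ w :: l₂ → x = w) := by
  obtain ⟨⟨hne, hnd, hch⟩, hh, hl⟩ := h
  subst hs
  have hs2 : l₁ ++ w :: l₂ = (l₁ ++ [w]) ++ l₂ := by simp
  rw [hs2] at hnd hch hh hl
  rw [List.nodup_append] at hnd
  simp only [List.Chain'] at hch; rw [List.isChain_append] at hch
  have hpre : IsPathFromTo A (l₁ ++ [w]) u w := by
    refine ⟨⟨by simp, hnd.1, hch.1⟩, ?_, ?_⟩
    · rw [List.head?_append] at hh
      cases hh1 : (l₁ ++ [w]).head? with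
      | none => simp [hh1] at hh; exact absurd (List.head?_eq_none_iff.1 hh1) (by simp)
      | some a => rw [hh1] at hh; simpa using hh
    · rw [List.getLast?_append]; simp
  have hsuf : IsPathFromTo A (w :: l₂) w v := by
    have hch2 : List.Chain' (fun a b => (a, b) ∈ A) (w :: l₂) := by
      rcases hch with ⟨h1, h2, h3⟩
      cases l₂ with
      | nil => simp [List.Chain']
      | cons b t =>
        simp only [List.Chain', List.isChain_cons_cons]
        refine ⟨h3 w (by rw [List.getLast?_append]; simp) b rfl, h2⟩
    refine ⟨⟨by simp, ?_, hch2⟩, by simp, ?_⟩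
    · rw [List.nodup_cons]
      exact ⟨fun hw => hnd.2.2 w (by simp) w hw rfl, hnd.2.1⟩
    · rw [List.getLast?_append] at hl
      cases l₂ with
      | nil => simpa using hl
      | cons b t =>
        rw [List.getLast?_cons_cons]
        cases hl1 : (b :: t).getLast? with
        | none => simp at hl1
        | some a => rw [hl1] at hl; simpa using hl
  refine ⟨hpre, hsuf, ?_⟩
  intro x hx1 hx2
  rcases List.mem_append.1 hx1 with hx1 | hx1
  · rcases List.mem_cons.1 hx2 with rfl | hx2
    · rfl
    · exact absurd hx2 (fun h => hnd.2.2 x (List.mem_append.2 (Or.inl hx1)) x h rfl)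
  · simpa using hx1

end PathAux

section PathAux2
variable {A : Set (V × V)} {p q : List V} {u v w : V}

lemma reflTransGen_of_chain' {R : V → V → Prop} : ∀ {l : List V} {a b : V},
    l.Chain' R → l.head? = some a → l.getLast? = some b → Relation.ReflTransGen R a b
  | [], a, b, _, hh, _ => by simp at hh
  | [x], a, b, _, hh, hl => by
    simp at hh hl; subst hh; subst hl; exact Relation.ReflTransGen.refl
  | x :: y :: t, a, b, hch, hh, hl => by
    simp at hh; subst hh
    simp only [List.Chain', List.isChain_cons_cons] at hch
    rw [List.getLast?_cons_cons] at hl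
    exact Relation.ReflTransGen.head hch.1 (reflTransGen_of_chain' hch.2 rfl hl)

lemma IsPathFromTo.reaches (h : IsPathFromTo A p u v) : Reaches A u v :=
  reflTransGen_of_chain' h.1.2.2 h.2.1 h.2.2

lemma mem_path_reaches (h : IsPathFromTo A p u v) {x : V} (hx : x ∈ p) :
    Reaches A u x ∧ Reaches A x v := by
  obtain ⟨l₁, l₂, rfl⟩ := List.append_of_mem hx
  obtain ⟨hpre, hsuf, -⟩ := split_path h rfl
  exact ⟨hpre.reaches, hsuf.reaches⟩

lemma reaches_path (h : Reaches A u v) : ∃ p, IsPathFromTo A p u v := by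
  induction h using Relation.ReflTransGen.head_induction_on with
  | refl => exact ⟨[v], singleton_path rfl⟩
  | head harc _ ih =>
    rename_i a c _
    obtain ⟨p, hp⟩ := ih
    by_cases hmem : a ∈ p
    · obtain ⟨l₁, l₂, rfl⟩ := List.append_of_mem hmem
      exact ⟨a :: l₂, (split_path hp rfl).2.1⟩
    · obtain ⟨t, rfl⟩ := hp.cons_struct
      refine ⟨a :: c :: t, ⟨⟨by simp, ?_, ?_⟩, rfl, ?_⟩⟩
      · rw [List.nodup_cons]; exact ⟨hmem, hp.nodup⟩
      · simp only [List.Chain', List.isChain_cons_cons]; exact ⟨harc, hp.1.2.2⟩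
      · rw [List.getLast?_cons_cons]; exact hp.2.2

lemma concat_path (h1 : IsPathFromTo A p u w) (h2 : IsPathFromTo A q w v)
    (hsh : ∀ x, x ∈ p → x ∈ q → x = w) :
    IsPathFromTo A (p ++ q.tail) u v ∧ (∀ x, x ∈ p ++ q.tail ↔ x ∈ p ∨ x ∈ q) := by
  obtain ⟨q', rfl⟩ := h2.cons_struct
  simp only [List.tail_cons]
  have hwq' : w ∉ q' := by
    have := h2.nodup; rw [List.nodup_cons] at this; exact this.1
  have hmem : ∀ x, x ∈ p ++ q' ↔ x ∈ p ∨ x ∈ w :: q' := by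
    intro x
    rw [List.mem_append]
    constructor
    · rintro (hx | hx)
      · exact Or.inl hx
      · exact Or.inr (List.mem_cons_of_mem _ hx)
    · rintro (hx | hx)
      · exact Or.inl hx
      · rcases List.mem_cons.1 hx with rfl | hx
        · exact Or.inl h1.last_mem
        · exact Or.inr hx
  refine ⟨⟨⟨by simp [h1.nonempty], ?_, ?_⟩, ?_, ?_⟩, hmem⟩
  · rw [List.nodup_append]
    refine ⟨h1.nodup, (List.nodup_cons.1 h2.nodup).2, ?_⟩
    intro x hx y hx2 hxy; subst hxy
    have := hsh x hx (List.mem_cons_of_mem _ hx2)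
    subst this; exact hwq' hx2
  · simp only [List.Chain', List.isChain_append]
    refine ⟨h1.1.2.2, (List.isChain_cons.1 h2.1.2.2).2, ?_⟩
    intro x hx y hy
    rw [h1.2.2] at hx; simp at hx; subst hx
    exact (List.isChain_cons.1 h2.1.2.2).1 y hy
  · rw [List.head?_append, h1.2.1]; rfl
  · cases q' with
    | nil =>
      have hv : w = v := by simpa using h2.2.2
      subst hv; simpa using h1.2.2
    | cons b t =>
      rw [List.getLast?_append]
      have := h2.2.2
      rw [List.getLast?_cons_cons] at this
      rw [this]; rfl

lemma path_join {a b : V} (h1 : IsPathFromTo A p u a) (h2 : IsPathFromTo A q b v)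
    (hab : (a, b) ∈ A) : ∃ s, IsPathFromTo A s u v ∧ ∀ x ∈ s, x ∈ p ∨ x ∈ q := by
  by_cases hint : ∃ x ∈ p, x ∈ {y | y ∈ q}
  · obtain ⟨l₁, w, l₂, rfl, hwq, hcl⟩ := exists_first_mem_split hint
    obtain ⟨hpre, -, -⟩ := split_path h1 rfl
    obtain ⟨m₁, m₂, rfl⟩ := List.append_of_mem hwq
    obtain ⟨-, hsuf, -⟩ := split_path h2 rfl
    have hsh : ∀ x, x ∈ l₁ ++ [w] → x ∈ w :: m₂ → x = w := by
      intro x hx1 hx2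
      rcases List.mem_append.1 hx1 with hx1 | hx1
      · exfalso
        apply hcl x hx1
        rcases List.mem_cons.1 hx2 with rfl | hx2
        · exact hwq
        · exact List.mem_append.2 (Or.inr (List.mem_cons_of_mem _ hx2))
      · simpa using hx1
    obtain ⟨hpath, hmem⟩ := concat_path hpre hsuf hsh
    refine ⟨_, hpath, ?_⟩
    intro x hx
    rcases (hmem x).1 hx with hx | hx
    · rcases List.mem_append.1 hx with hx | hx
      · exact Or.inl (List.mem_append.2 (Or.inl hx))
      · simp at hx; subst hx
        exact Or.inr hwq
    · exact Or.inr (by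
        rcases List.mem_cons.1 hx with rfl | hx
        · exact hwq
        · exact List.mem_append.2 (Or.inr (List.mem_cons_of_mem _ hx)))
  · push_neg at hint
    refine ⟨p ++ q, ⟨⟨by simp [h1.nonempty], ?_, ?_⟩, ?_, ?_⟩, ?_⟩
    · rw [List.nodup_append]
      exact ⟨h1.nodup, h2.nodup, fun x hx y hx2 hxy => hint x hx (by subst hxy; exact hx2)⟩
    · simp only [List.Chain', List.isChain_append]
      refine ⟨h1.1.2.2, h2.1.2.2, ?_⟩
      intro x hx y hy
      rw [h1.2.2] at hx; simp at hx; subst hx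
      rw [h2.2.1] at hy; simp at hy; subst hy
      exact hab
    · rw [List.head?_append, h1.2.1]; rfl
    · rw [List.getLast?_append, h2.2.2]; rfl
    · intro x hx; exact List.mem_append.1 hx

lemma second_vertex (h : IsPathFromTo A p u v) (hne : u ≠ v) :
    ∃ s t, p = u :: s :: t ∧ (u, s) ∈ A ∧ s ∈ p := by
  obtain ⟨t, rfl⟩ := h.cons_struct
  cases t with
  | nil => exact absurd (by simpa using h.2.2) hne
  | cons s t' =>
    refine ⟨s, t', rfl, ?_, List.mem_cons_of_mem _ (List.mem_cons_self)⟩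
    exact (List.isChain_cons_cons.1 h.1.2.2).1

lemma mem_last_of_no_out {x : V} (h : IsPathFromTo A p u v) (hx : x ∈ p)
    (hno : ∀ z, (x, z) ∉ A) : x = v := by
  obtain ⟨l₁, l₂, rfl⟩ := List.append_of_mem hx
  cases l₂ with
  | nil =>
    have := h.2.2
    rw [List.getLast?_append] at this
    simpa using this
  | cons z t =>
    exfalso
    exact hno z (h.arc_mem (mem_arcsOf_append_right (by rw [arcsOf_cons_cons]; exact List.mem_cons_self)))

lemma out_arc_of_mem_ne_last {x : V} (h : IsPathFromTo A p u v) (hx : x ∈ p) (hne : x ≠ v) :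
    ∃ z, (x, z) ∈ arcsOf p ∧ (x, z) ∈ A := by
  obtain ⟨l₁, l₂, rfl⟩ := List.append_of_mem hx
  cases l₂ with
  | nil =>
    exfalso
    have := h.2.2
    rw [List.getLast?_append] at this
    simp at this; exact hne this
  | cons z t =>
    have hz : (x, z) ∈ arcsOf (l₁ ++ x :: z :: t) :=
      mem_arcsOf_append_right (by rw [arcsOf_cons_cons]; exact List.mem_cons_self)
    exact ⟨z, hz, h.arc_mem hz⟩

lemma in_arc_of_mem_ne_head {x : V} (h : IsPathFromTo A p u v) (hx : x ∈ p) (hne : x ≠ u) :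
    ∃ z, (z, x) ∈ arcsOf p ∧ (z, x) ∈ A := by
  obtain ⟨l₁, l₂, rfl⟩ := List.append_of_mem hx
  by_cases hl : l₁ = []
  · exfalso
    subst hl
    have := h.2.1; simp at this; exact hne this
  · have hz : (l₁.getLast hl, x) ∈ arcsOf (l₁ ++ x :: l₂) := mem_arcsOf_junction l₁ x l₂ hl rfl
    exact ⟨l₁.getLast hl, hz, h.arc_mem hz⟩

lemma head_no_in_arc {z : V} (h : IsPathFromTo A p u v) : (z, u) ∉ arcsOf p := by
  intro harc
  have hu : u ∈ p.tail := snd_mem_tail_of_mem_arcsOf harc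
  obtain ⟨t, rfl⟩ := h.cons_struct
  simp at hu
  exact (List.nodup_cons.1 h.nodup).1 hu

lemma last_no_out_arc {z : V} (h : IsPathFromTo A p u v) : (v, z) ∉ arcsOf p := by
  intro harc
  obtain ⟨l₁, l₂, hsp⟩ := exists_split_of_mem_arcsOf harc
  simp only at hsp
  have hsuf := (split_path h hsp).2.1
  have hlast := hsuf.2.2
  rw [List.getLast?_cons_cons] at hlast
  have hvmem : v ∈ z :: l₂ := mem_of_getLast?' hlast
  exact (List.nodup_cons.1 hsuf.nodup).1 hvmem

end PathAux2

section GraphAux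
variable {A : Set (V × V)} {u v w : V}

lemma acyclic_irrefl (hac : Acyclic A) (u : V) : (u, u) ∉ A :=
  fun h => hac u u h Relation.ReflTransGen.refl

lemma acyclic_no_two_cycle (hac : Acyclic A) (h1 : (u, v) ∈ A) (h2 : (v, u) ∈ A) : False :=
  hac u v h1 (Relation.ReflTransGen.single h2)

lemma reaches_antisym (hac : Acyclic A) (h1 : Reaches A u v) (h2 : Reaches A v u) : u = v := by
  rcases Relation.ReflTransGen.cases_head h1 with rfl | ⟨c, hc, hcv⟩
  · rfl
  · exact absurd (hcv.trans h2) (hac u c hc)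

lemma acyclic_wf_fwd [Finite V] (hac : Acyclic A) :
    WellFounded (fun a b : V => (b, a) ∈ A) := by
  have htrans : IsTrans V (Relation.TransGen fun a b : V => (b, a) ∈ A) := inferInstance
  have hirr : IsIrrefl V (Relation.TransGen fun a b : V => (b, a) ∈ A) := by
    constructor
    intro x hx
    rw [Relation.transGen_swap (r := fun a b : V => (a, b) ∈ A)] at hx
    rcases (Relation.transGen_iff _ _ _).1 hx with h | ⟨c, htg, hcx⟩
    · exact acyclic_irrefl hac x h
    · exact hac c x hcx htg.to_reflTransGen
  have hwf : WellFounded (Relation.TransGen fun a b : V => (b, a) ∈ A) :=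
    Finite.wellFounded_of_trans_of_irrefl _
  exact Subrelation.wf (fun h => Relation.TransGen.single h) hwf

lemma acyclic_wf_bwd [Finite V] (hac : Acyclic A) :
    WellFounded (fun a b : V => (a, b) ∈ A) := by
  have hirr : IsIrrefl V (Relation.TransGen fun a b : V => (a, b) ∈ A) := by
    constructor
    intro x hx
    rcases (Relation.transGen_iff _ _ _).1 hx with h | ⟨c, htg, hcx⟩
    · exact acyclic_irrefl hac x h
    · exact hac c x hcx htg.to_reflTransGen
  have hwf : WellFounded (Relation.TransGen fun a b : V => (a, b) ∈ A) :=
    Finite.wellFounded_of_trans_of_irrefl _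
  exact Subrelation.wf (fun h => Relation.TransGen.single h) hwf

/-- Every vertex has a path to a "sink" of `A` (no outgoing arcs). -/
lemma exists_path_to_sink [Finite V] (hac : Acyclic A) (v : V) :
    ∃ p w, IsPathFromTo A p v w ∧ (∀ z, (w, z) ∉ A) := by
  have key : ∀ v : V, ∃ p w, IsPathFromTo A p v w ∧ (∀ z, (w, z) ∉ A) ∧
      (∀ x ∈ p, Reaches A v x) := by
    intro v
    induction v using WellFounded.induction (acyclic_wf_fwd hac) with
    | _ v ih =>
      by_cases hout : ∃ z, (v, z) ∈ A
      · obtain ⟨z, hz⟩ := hout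
        obtain ⟨p, w, hp, hw, hreach⟩ := ih z hz
        have hvp : v ∉ p := by
          intro hvp
          exact hac v z hz (hreach v hvp)
        obtain ⟨t, rfl⟩ := hp.cons_struct
        refine ⟨v :: z :: t, w, ⟨⟨by simp, ?_, ?_⟩, rfl, ?_⟩, hw, ?_⟩
        · rw [List.nodup_cons]; exact ⟨hvp, hp.nodup⟩
        · simp only [List.Chain', List.isChain_cons_cons]; exact ⟨hz, hp.1.2.2⟩
        · rw [List.getLast?_cons_cons]; exact hp.2.2
        · intro x hx
          rcases List.mem_cons.1 hx with rfl | hx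
          · exact Relation.ReflTransGen.refl
          · exact Relation.ReflTransGen.head hz (hreach x hx)
      · push_neg at hout
        exact ⟨[v], v, singleton_path rfl, hout, fun x hx => by simp at hx; subst hx; exact Relation.ReflTransGen.refl⟩
  obtain ⟨p, w, hp, hw, -⟩ := key v
  exact ⟨p, w, hp, hw⟩

/-- Every vertex has a path from a "source" of `A` (no incoming arcs). -/
lemma exists_path_from_source [Finite V] (hac : Acyclic A) (v : V) :
    ∃ p w, IsPathFromTo A p w v ∧ (∀ z, (z, w) ∉ A) := by
  have key : ∀ v : V, ∃ p w, IsPathFromTo A p w v ∧ (∀ z, (z, w) ∉ A) ∧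
      (∀ x ∈ p, Reaches A x v) := by
    intro v
    induction v using WellFounded.induction (acyclic_wf_bwd hac) with
    | _ v ih =>
      by_cases hin : ∃ z, (z, v) ∈ A
      · obtain ⟨z, hz⟩ := hin
        obtain ⟨p, w, hp, hw, hreach⟩ := ih z hz
        have hvp : v ∉ p := by
          intro hvp
          exact hac z v hz (hreach v hvp)
        have hzv : IsPathFromTo A [z, v] z v := by
          refine ⟨⟨by simp, ?_, ?_⟩, rfl, ?_⟩
          · simp
            intro h; exact acyclic_irrefl hac v (h ▸ hz)
          · simp [hz, List.Chain']
          · rw [List.getLast?_cons_cons]; rfl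
        have hcat := concat_path hp hzv (by
            intro x hx hx2
            simp at hx2
            rcases hx2 with rfl | rfl
            · rfl
            · exact absurd hx hvp)
        obtain ⟨hpath, hmem⟩ := hcat
        refine ⟨p ++ [v], w, hpath, hw, ?_⟩
        intro x hx
        rcases (hmem x).1 hx with hx | hx
        · exact (hreach x hx).tail hz
        · simp at hx
          rcases hx with rfl | rfl
          · exact Relation.ReflTransGen.single hz
          · exact Relation.ReflTransGen.refl
      · push_neg at hin
        exact ⟨[v], v, singleton_path rfl, hin, fun x hx => by simp at hx; subst hx; exact Relation.ReflTransGen.refl⟩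
  obtain ⟨p, w, hp, hw, -⟩ := key v
  exact ⟨p, w, hp, hw⟩

end GraphAux

section NetworkAux

lemma no_out_arcs_of_outdeg_zero [Finite V] {A : Set (V × V)} {v : V}
    (h : outdeg A v = 0) : ∀ z, (v, z) ∉ A := by
  intro z hz
  have : {w | (v, w) ∈ A} = ∅ := (Set.ncard_eq_zero (Set.toFinite _)).1 h
  exact absurd hz (by rw [Set.eq_empty_iff_forall_notMem] at this; exact this z)

lemma outdeg_zero_of_no_out [Finite V] {A : Set (V × V)} {v : V}
    (h : ∀ z, (v, z) ∉ A) : outdeg A v = 0 := by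
  rw [outdeg, Set.ncard_eq_zero]
  rw [Set.eq_empty_iff_forall_notMem]
  exact h

lemma indeg_zero_of_no_in [Finite V] {A : Set (V × V)} {v : V}
    (h : ∀ z, (z, v) ∉ A) : indeg A v = 0 := by
  rw [indeg, Set.ncard_eq_zero]
  rw [Set.eq_empty_iff_forall_notMem]
  exact h

lemma in_unique_of_indeg_one [Finite V] {A : Set (V × V)} {v u u' : V}
    (h : indeg A v = 1) (h1 : (u, v) ∈ A) (h2 : (u', v) ∈ A) : u = u' := by
  obtain ⟨a, ha⟩ := Set.ncard_eq_one.1 h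
  have e1 : u ∈ {w | (w, v) ∈ A} := h1
  have e2 : u' ∈ {w | (w, v) ∈ A} := h2
  rw [ha] at e1 e2
  simp at e1 e2; rw [e1, e2]

lemma out_unique_of_outdeg_one [Finite V] {A : Set (V × V)} {v b b' : V}
    (h : outdeg A v = 1) (h1 : (v, b) ∈ A) (h2 : (v, b') ∈ A) : b = b' := by
  obtain ⟨a, ha⟩ := Set.ncard_eq_one.1 h
  have e1 : b ∈ {w | (v, w) ∈ A} := h1
  have e2 : b' ∈ {w | (v, w) ∈ A} := h2
  rw [ha] at e1 e2
  simp at e1 e2; rw [e1, e2]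

variable {N : PhyloNetwork V L}

lemma leaf_no_out (hv : IsLeafV N.arcs v) : ∀ z, (v, z) ∉ N.arcs := by
  haveI := N.vfin
  exact no_out_arcs_of_outdeg_zero hv.2

lemma root_no_in {r : V} (hr : IsRoot N.arcs r) : ∀ z, (z, r) ∉ N.arcs := by
  haveI := N.vfin
  intro z hz
  have : {w | (w, r) ∈ N.arcs} = ∅ := (Set.ncard_eq_zero (Set.toFinite _)).1 hr.1
  exact absurd hz (by rw [Set.eq_empty_iff_forall_notMem] at this; exact this z)

lemma in_arc_of_ne_root {r : V} (hr : IsRoot N.arcs r) (v : V) (hv : v ≠ r) :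
    ∃ u, (u, v) ∈ N.arcs := by
  haveI := N.vfin
  by_contra h
  push_neg at h
  have h0 : indeg N.arcs v = 0 := indeg_zero_of_no_in h
  rcases N.vertex_type v with ht | ht | ht | ht
  · exact hv (N.root_unique v r ht hr)
  · rw [ht.1] at h0; simp at h0
  · rw [ht.1] at h0; simp at h0
  · rw [ht.1] at h0; simp at h0

lemma root_reaches_all {r : V} (hr : IsRoot N.arcs r) (v : V) : Reaches N.arcs r v := by
  haveI := N.vfin
  obtain ⟨p, w, hp, hw⟩ := exists_path_from_source N.acyclic v
  have hwr : w = r := by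
    by_contra hne
    obtain ⟨z, hz⟩ := in_arc_of_ne_root hr w hne
    exact hw z hz
  subst hwr
  exact hp.reaches

lemma reach_leaf (v : V) : ∃ w, IsLeafV N.arcs w ∧ Reaches N.arcs v w := by
  haveI := N.vfin
  obtain ⟨p, w, hp, hw⟩ := exists_path_to_sink N.acyclic v
  have h0 : outdeg N.arcs w = 0 := outdeg_zero_of_no_out hw
  rcases N.vertex_type w with ht | ht | ht | ht
  · rw [ht.2] at h0; simp at h0
  · rw [ht.2] at h0; simp at h0
  · rw [ht.2] at h0; simp at h0
  · exact ⟨w, ht, hp.reaches⟩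

lemma outdeg_le_two (v : V) : outdeg N.arcs v ≤ 2 := by
  rcases N.vertex_type v with ht | ht | ht | ht
  · rw [ht.2]
  · rw [ht.2]
  · rw [ht.2]; omega
  · rw [ht.2]; omega

lemma two_in_unique_out {a a' b b' : V} (h1 : (a, v) ∈ N.arcs) (h2 : (a', v) ∈ N.arcs)
    (hne : a ≠ a') (h3 : (v, b) ∈ N.arcs) (h4 : (v, b') ∈ N.arcs) : b = b' := by
  haveI := N.vfin
  rcases N.vertex_type v with ht | ht | ht | ht
  · exact absurd h1 (root_no_in ht a)
  · exact absurd (in_unique_of_indeg_one ht.1 h1 h2) hne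
  · exact out_unique_of_outdeg_one ht.2 h3 h4
  · exact absurd (in_unique_of_indeg_one ht.1 h1 h2) hne

lemma not_leaf_of_out_arc {z : V} (h : (v, z) ∈ N.arcs) : ¬ IsLeafV N.arcs v :=
  fun hl => leaf_no_out hl z h

/-- No three internally-disjoint nontrivial paths from a vertex of outdegree ≤ 2. -/
lemma no_three_fan {u l1 l2 l3 : V} {p1 p2 p3 : List V}
    (h1 : IsPathFromTo N.arcs p1 u l1) (h2 : IsPathFromTo N.arcs p2 u l2)
    (h3 : IsPathFromTo N.arcs p3 u l3)
    (hn1 : l1 ≠ u) (hn2 : l2 ≠ u) (hn3 : l3 ≠ u)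
    (hd12 : l1 ≠ l2) (hd13 : l1 ≠ l3) (hd23 : l2 ≠ l3)
    (hs12 : ∀ x, x ∈ p1 → x ∈ p2 → x = u)
    (hs13 : ∀ x, x ∈ p1 → x ∈ p3 → x = u)
    (hs23 : ∀ x, x ∈ p2 → x ∈ p3 → x = u) : False := by
  haveI := N.vfin
  obtain ⟨s1, t1, -, ha1, hm1⟩ := second_vertex h1 (Ne.symm hn1)
  obtain ⟨s2, t2, -, ha2, hm2⟩ := second_vertex h2 (Ne.symm hn2)
  obtain ⟨s3, t3, -, ha3, hm3⟩ := second_vertex h3 (Ne.symm hn3)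
  have hne12 : s1 ≠ s2 := by
    intro h; subst h
    have := hs12 s1 hm1 hm2
    subst this
    exact acyclic_irrefl N.acyclic _ ha1
  have hne13 : s1 ≠ s3 := by
    intro h; subst h
    have := hs13 s1 hm1 hm3
    subst this
    exact acyclic_irrefl N.acyclic _ ha1
  have hne23 : s2 ≠ s3 := by
    intro h; subst h
    have := hs23 s2 hm2 hm3
    subst this
    exact acyclic_irrefl N.acyclic _ ha2
  have hsub : ({s1, s2, s3} : Set V) ⊆ {w | (u, w) ∈ N.arcs} := by
    intro x hx
    rcases hx with rfl | rfl | rfl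
    · exact ha1
    · exact ha2
    · exact ha3
  have h3card : ({s1, s2, s3} : Set V).ncard = 3 :=
    Set.ncard_eq_three.2 ⟨s1, s2, s3, hne12, hne13, hne23, rfl⟩
  have hle : ({s1, s2, s3} : Set V).ncard ≤ outdeg N.arcs u :=
    Set.ncard_le_ncard hsub (Set.toFinite _)
  rw [h3card] at hle
  have := outdeg_le_two (N := N) u
  omega

lemma leafSet_finite : (leafSet N).Finite := by
  haveI := N.vfin
  exact (Set.finite_range N.lab).subset (by rintro x ⟨v, -, rfl⟩; exact ⟨v, rfl⟩)

lemma tripletLeaves_TN_subset : tripletLeaves (TN N) ⊆ leafSet N := by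
  rintro x ⟨t, ht, hx⟩
  obtain ⟨a, b, c, ha, hb, hc, hla, hlb, hlc, -⟩ := ht
  rcases hx with rfl | rfl | rfl
  · exact ⟨a, ha, hla⟩
  · exact ⟨b, hb, hlb⟩
  · exact ⟨c, hc, hlc⟩

/-- The contradiction device: an embedded triplet with a mixed cherry and outer leaf in `S`. -/
lemma forb {S : Set L} (hS : SNSet (TN N) S) {pp qq a b c : V}
    (ha : IsLeafV N.arcs a) (hb : IsLeafV N.arcs b) (hc : IsLeafV N.arcs c)
    (hla : N.lab a ∈ S) (hlb : N.lab b ∉ S) (hlc : N.lab c ∈ S)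
    (hab : a ≠ b) (hac : a ≠ c) (hbc : b ≠ c)
    (hemb : HasEmbedding N.arcs pp qq a b c) : False :=
  hS.2 ⟨N.lab a, N.lab b, N.lab c,
    ⟨a, b, c, ha, hb, hc, rfl, rfl, rfl, hab, hac, hbc, pp, qq, hemb⟩, hla, hlc, hlb⟩

end NetworkAux

section MengerAux
variable {A B : Set (V × V)}

lemma acyclic_mono (hsub : B ⊆ A) (hac : Acyclic A) : Acyclic B := by
  intro u v huv hre
  exact hac u v (hsub huv) (Relation.ReflTransGen.mono (r := fun a b => (a, b) ∈ B) (p := fun a b => (a, b) ∈ A) (by intro a b hab; exact hsub hab) v u hre)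

lemma path_mono (hsub : B ⊆ A) {p : List V} {u v : V}
    (h : IsPathFromTo B p u v) : IsPathFromTo A p u v :=
  ⟨⟨h.1.1, h.1.2.1, h.1.2.2.imp fun _ _ hab => hsub hab⟩, h.2.1, h.2.2⟩

/-- The two-path / single-dominator dichotomy (Menger for `k = 2`). -/
theorem dich [Finite V] (hac : Acyclic A) (r : V) (T : Set V)
    (hrT : r ∉ T)
    (hrin : ∀ z, (z, r) ∉ A)
    (hTout : ∀ t ∈ T, ∀ z, (t, z) ∉ A)
    (hTin : ∀ t ∈ T, ∀ u u', (u, t) ∈ A → (u', t) ∈ A → u = u')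
    (hdeg : ∀ v a a' b b', a ≠ a' → (a, v) ∈ A → (a', v) ∈ A →
      (v, b) ∈ A → (v, b') ∈ A → b = b')
    (hex : ∃ t ∈ T, Reaches A r t) :
    (∃ t1 t2 p1 p2, t1 ∈ T ∧ t2 ∈ T ∧ t1 ≠ t2 ∧
      IsPathFromTo A p1 r t1 ∧ IsPathFromTo A p2 r t2 ∧
      (∀ x, x ∈ p1 → x ∈ p2 → x = r)) ∨
    (∃ v, v ≠ r ∧ ∀ t ∈ T, ∀ p, IsPathFromTo A p r t → v ∈ p) := by
  obtain ⟨t, htT, htR⟩ := hex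
  obtain ⟨P, hP⟩ := reaches_path htR
  set Ares : Set (V × V) := {e | (e ∈ A ∧ e ∉ {e' | e' ∈ arcsOf P}) ∨ e.swap ∈ {e' | e' ∈ arcsOf P}} with hAres
  by_cases haug : ∃ t' ∈ T, Reaches Ares r t'
  · -- augmenting path exists: build two disjoint paths
    left
    obtain ⟨t', ht'T, ht'R⟩ := haug
    obtain ⟨Q, hQ⟩ := reaches_path ht'R
    have hrt : r ≠ t := fun h => hrT (h ▸ htT)
    have hrt' : r ≠ t' := fun h => hrT (h ▸ ht'T)
    have hQres : ∀ e : V × V, e ∈ arcsOf Q →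
        (e ∈ A ∧ e ∉ {e' | e' ∈ arcsOf P}) ∨ e.swap ∈ {e' | e' ∈ arcsOf P} :=
      fun e he => hQ.arc_mem he
    -- t' ≠ t
    have htt' : t' ≠ t := by
      intro h
      subst h
      obtain ⟨z, hzQ, hzA⟩ := in_arc_of_mem_ne_head hQ hQ.last_mem (Ne.symm hrt')
      rcases hQres _ hzQ with ⟨hzA2, hzNP⟩ | hzswap
      · obtain ⟨zP, hzP, hzPA⟩ := in_arc_of_mem_ne_head hP hP.last_mem (Ne.symm hrt')
        have : z = zP := hTin t' ht'T z zP hzA2 hzPA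
        subst this
        exact hzNP hzP
      · exact hTout t' ht'T z (hP.arc_mem hzswap)
    -- the flow arc set
    set F : Set (V × V) :=
      {e | (e ∈ arcsOf P ∨ (e ∈ arcsOf Q ∧ e ∈ A)) ∧ e.swap ∉ arcsOf Q} with hF
    have hFsubA : F ⊆ A := by
      rintro e ⟨he | he, -⟩
      · exact hP.arc_mem he
      · exact he.2
    have hFac : Acyclic F := acyclic_mono hFsubA hac
    have no2 : ∀ e : V × V, e ∈ A → e.swap ∈ A → False := by
      rintro ⟨a, b⟩ h1 h2
      exact acyclic_no_two_cycle hac h1 h2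
    -- star: every non-sink vertex with an `F`-in-arc has an `F`-out-arc
    have star : ∀ v, v ≠ t → v ≠ t' → (∃ e ∈ F, e.2 = v) → ∃ g ∈ F, g.1 = v := by
      rintro v hvt hvt' ⟨e, ⟨heP | heQ, heswap⟩, rfl⟩
      · have hvP : e.2 ∈ P := snd_mem_of_mem_arcsOf heP
        obtain ⟨gz, hgP, hgA⟩ := out_arc_of_mem_ne_last hP hvP hvt
        by_cases hgsw : (e.2, gz).swap ∈ arcsOf Q
        · have hvQ : e.2 ∈ Q := snd_mem_of_mem_arcsOf (l := Q) (e := (gz, e.2)) hgsw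
          obtain ⟨z, hzQ, hzres⟩ := out_arc_of_mem_ne_last hQ hvQ hvt'
          rcases hQres _ hzQ with ⟨hzA, hzNP⟩ | hzsw
          · refine ⟨(e.2, z), ⟨Or.inr ⟨hzQ, hzA⟩, ?_⟩, rfl⟩
            intro hzsw2
            have : gz = z := nodup_unique_in hQ.nodup hgsw hzsw2
            subst this
            exact hzNP hgP
          · exfalso
            have : z = e.1 := nodup_unique_in hP.nodup hzsw heP
            subst this
            exact heswap hzQ
        · exact ⟨(e.2, gz), ⟨Or.inl hgP, hgsw⟩, rfl⟩
      · have hvQ : e.2 ∈ Q := snd_mem_of_mem_arcsOf heQ.1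
        obtain ⟨z, hzQ, hzres⟩ := out_arc_of_mem_ne_last hQ hvQ hvt'
        rcases hQres _ hzQ with ⟨hzA, hzNP⟩ | hzsw
        · refine ⟨(e.2, z), ⟨Or.inr ⟨hzQ, hzA⟩, ?_⟩, rfl⟩
          intro hzsw2
          have : z = e.1 := nodup_unique_in hQ.nodup hzsw2 heQ.1
          subst this
          exact no2 e heQ.2 hzA
        · have hvP : e.2 ∈ P := snd_mem_of_mem_arcsOf (l := P) (e := (z, e.2)) hzsw
          obtain ⟨gz, hgP, hgA⟩ := out_arc_of_mem_ne_last hP hvP hvt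
          refine ⟨(e.2, gz), ⟨Or.inl hgP, ?_⟩, rfl⟩
          intro hgsw
          have : gz = e.1 := nodup_unique_in hQ.nodup hgsw heQ.1
          subst this
          exact no2 e heQ.2 (hP.arc_mem hgP)
    -- mixed uniqueness helper
    have uf_mix : ∀ e e' : V × V, e ∈ arcsOf P → e.swap ∉ arcsOf Q →
        e' ∈ arcsOf Q → e' ∈ A → e'.swap ∉ arcsOf Q → e.2 = e'.2 → e = e' := by
      intro e e' heP hesw he'Q he'A he'sw hv
      by_cases hvt : e.2 = t
      · have h1 : e.1 = e'.1 := hTin t htT e.1 e'.1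
          (by rw [← hvt]; exact hP.arc_mem heP)
          (by rw [← hvt, hv]; exact he'A)
        exact Prod.ext h1 hv
      · by_cases hvt' : e.2 = t'
        · exfalso
          have hvP : e.2 ∈ P := snd_mem_of_mem_arcsOf heP
          obtain ⟨z, hzP, hzA⟩ := out_arc_of_mem_ne_last hP hvP (by rw [hvt']; exact htt')
          apply hTout t' ht'T z
          rw [← hvt']
          exact hzA
        · have hvQ : e.2 ∈ Q := by rw [hv]; exact snd_mem_of_mem_arcsOf he'Q
          obtain ⟨z, hzQ, hzres⟩ := out_arc_of_mem_ne_last hQ hvQ hvt'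
          rcases hQres _ hzQ with ⟨hzA, hzNP⟩ | hzsw
          · by_cases hee' : e.1 = e'.1
            · exact Prod.ext hee' hv
            · exfalso
              have hvP : e.2 ∈ P := snd_mem_of_mem_arcsOf heP
              obtain ⟨gz, hgP, hgA⟩ := out_arc_of_mem_ne_last hP hvP hvt
              have hgz : gz = z := hdeg e.2 e.1 e'.1 gz z hee'
                (hP.arc_mem heP)
                (by rw [hv]; exact he'A)
                hgA hzA
              subst hgz
              exact hzNP hgP
          · exfalso
            have : z = e.1 := nodup_unique_in hP.nodup hzsw heP
            subst this
            exact hesw hzQ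
    have uniqueFin : ∀ e e' : V × V, e ∈ F → e' ∈ F → e.2 = e'.2 → e = e' := by
      rintro e e' ⟨heP | heQ, hesw⟩ ⟨he'P | he'Q, he'sw⟩ hv
      · have h1 : e.1 = e'.1 := nodup_unique_in hP.nodup
          (show (e.1, e.2) ∈ arcsOf P from heP)
          (show (e'.1, e.2) ∈ arcsOf P by rw [hv]; exact he'P)
        exact Prod.ext h1 hv
      · exact uf_mix e e' heP hesw he'Q.1 he'Q.2 he'sw hv
      · exact (uf_mix e' e he'P he'sw heQ.1 heQ.2 hesw hv.symm).symm
      · have h1 : e.1 = e'.1 := nodup_unique_in hQ.nodup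
          (show (e.1, e.2) ∈ arcsOf Q from heQ.1)
          (show (e'.1, e.2) ∈ arcsOf Q by rw [hv]; exact he'Q.1)
        exact Prod.ext h1 hv
    -- the two starting arcs at r
    obtain ⟨s1, tl1, hPeq, hs1A, hs1m⟩ := second_vertex hP hrt
    have hpfP : (r, s1) ∈ arcsOf P := by
      rw [hPeq, arcsOf_cons_cons]; exact List.mem_cons_self
    have hpfF : (r, s1) ∈ F := by
      refine ⟨Or.inl hpfP, ?_⟩
      exact head_no_in_arc hQ
    obtain ⟨s2, tl2, hQeq, hs2res, hs2m⟩ := second_vertex hQ hrt'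
    have hqfQ : (r, s2) ∈ arcsOf Q := by
      rw [hQeq, arcsOf_cons_cons]; exact List.mem_cons_self
    have hqfA : (r, s2) ∈ A ∧ (r, s2) ∉ {e' | e' ∈ arcsOf P} := by
      rcases hQres _ hqfQ with h | h
      · exact h
      · exact absurd (hP.arc_mem h) (hrin s2)
    have hqfF : (r, s2) ∈ F := by
      refine ⟨Or.inr ⟨hqfQ, hqfA.1⟩, ?_⟩
      exact head_no_in_arc hQ
    have hs12 : s1 ≠ s2 := by
      intro h; subst h
      exact hqfA.2 hpfP
    have hFinr : ∀ e : V × V, e ∈ F → e.2 ≠ r := by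
      rintro ⟨e1, e2⟩ ⟨heP | heQ, -⟩ h2
      · subst h2
        exact hrin e1 (hP.arc_mem heP)
      · subst h2
        exact hrin e1 heQ.2
    -- first extracted path
    obtain ⟨p1, w1, hp1, hw1⟩ := exists_path_to_sink hFac r
    have hw1r : w1 ≠ r := by
      intro h; subst h
      exact hw1 s1 hpfF
    obtain ⟨z1, hz1arc, hz1F⟩ := in_arc_of_mem_ne_head hp1 hp1.last_mem hw1r
    have hw1T : w1 = t ∨ w1 = t' := by
      by_contra hcon
      push_neg at hcon
      obtain ⟨g, hgF, hg1⟩ := star w1 hcon.1 hcon.2 ⟨(z1, w1), hz1F, rfl⟩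
      apply hw1 g.2
      rw [← hg1, Prod.mk.eta]
      exact hgF
    -- second flow
    set F1 : Set (V × V) := {e | e ∈ F ∧ e ∉ arcsOf p1} with hF1
    have hF1sub : F1 ⊆ F := fun e he => he.1
    have hF1subA : F1 ⊆ A := fun e he => hFsubA (he.1)
    obtain ⟨p2, w2, hp2, hw2⟩ := exists_path_to_sink (acyclic_mono hF1subA hac) r
    have hroot1 : ∃ e : V × V, e ∈ F1 ∧ e.1 = r := by
      by_cases hpf1 : (r, s1) ∈ arcsOf p1
      · refine ⟨(r, s2), ⟨hqfF, ?_⟩, rfl⟩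
        intro hqf1
        exact hs12 (nodup_unique_out hp1.nodup hpf1 hqf1)
      · exact ⟨(r, s1), ⟨hpfF, hpf1⟩, rfl⟩
    have hw2r : w2 ≠ r := by
      intro h; subst h
      obtain ⟨e, heF1, he1⟩ := hroot1
      apply hw2 e.2
      rw [← he1, Prod.mk.eta]
      exact heF1
    obtain ⟨z2, hz2arc, hz2F1⟩ := in_arc_of_mem_ne_head hp2 hp2.last_mem hw2r
    have hw2p1 : w2 ∉ p1 := by
      intro hmem
      obtain ⟨y1, hy1arc, hy1F⟩ := in_arc_of_mem_ne_head hp1 hmem hw2r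
      have heq : (z2, w2) = (y1, w2) := uniqueFin _ _ (hF1sub hz2F1) hy1F rfl
      rw [heq] at hz2F1
      exact hz2F1.2 hy1arc
    have hw2T : w2 = t ∨ w2 = t' := by
      by_contra hcon
      push_neg at hcon
      obtain ⟨g, hgF, hg1⟩ := star w2 hcon.1 hcon.2 ⟨(z2, w2), hF1sub hz2F1, rfl⟩
      have hgp1 : g ∉ arcsOf p1 := by
        intro hg
        exact hw2p1 (hg1 ▸ fst_mem_of_mem_arcsOf hg)
      apply hw2 g.2
      rw [← hg1, Prod.mk.eta]
      exact ⟨hgF, hgp1⟩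
    have hw12 : w1 ≠ w2 := fun h => hw2p1 (h ▸ hp1.last_mem)
    have hshare : ∀ x, x ∈ p1 → x ∈ p2 → x = r := by
      intro x hx1 hx2
      by_contra hxr
      obtain ⟨y1, hy1arc, hy1F⟩ := in_arc_of_mem_ne_head hp1 hx1 hxr
      obtain ⟨y2, hy2arc, hy2F⟩ := in_arc_of_mem_ne_head hp2 hx2 hxr
      have heq : (y1, x) = (y2, x) := uniqueFin _ _ hy1F (hF1sub hy2F) rfl
      rw [← heq] at hy2F
      exact hy2F.2 hy1arc
    have hw1Tm : w1 ∈ T := by rcases hw1T with rfl | rfl; exacts [htT, ht'T]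
    have hw2Tm : w2 ∈ T := by rcases hw2T with rfl | rfl; exacts [htT, ht'T]
    exact ⟨w1, w2, p1, p2, hw1Tm, hw2Tm, hw12,
      path_mono hFsubA hp1, path_mono hF1subA hp2, hshare⟩
  · -- no augmenting path: produce a dominator
    right
    set Z : Set V := {x | Reaches Ares r x} with hZ
    have hTZ : ∀ t'' ∈ T, t'' ∉ Z := by
      intro t'' ht'' hmem
      exact haug ⟨t'', ht'', hmem⟩
    have hback : ∀ e ∈ arcsOf P, e.2 ∈ Z → e.1 ∈ Z := by
      intro e he h2
      refine Relation.ReflTransGen.tail h2 (Or.inr ?_)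
      exact he
    have hrZ : r ∈ Z := Relation.ReflTransGen.refl
    obtain ⟨estar, hestar, hea, heb⟩ := exists_cross_pair hP.2.1 hrZ hP.2.2 (hTZ t htT)
    have hdomarc : ∀ t'' ∈ T, ∀ p, IsPathFromTo A p r t'' → estar ∈ arcsOf p := by
      intro t'' ht'' p hp
      obtain ⟨e2, he2, he2a, he2b⟩ := exists_cross_pair hp.2.1 hrZ hp.2.2 (hTZ t'' ht'')
      have he2P : e2 ∈ arcsOf P := by
        by_contra hne
        exact he2b (Relation.ReflTransGen.tail he2a (Or.inl ⟨hp.arc_mem he2, hne⟩))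
      have : e2 = estar := unique_cross_pair hback he2P he2a he2b hestar hea heb
      rw [← this]; exact he2
    by_cases har : estar.1 = r
    · refine ⟨estar.2, ?_, ?_⟩
      · intro h
        apply hrin estar.1
        rw [← h]
        exact hP.arc_mem hestar
      · intro t'' ht'' p hp
        exact (mem_of_mem_arcsOf (hdomarc t'' ht'' p hp)).2
    · refine ⟨estar.1, har, ?_⟩
      intro t'' ht'' p hp
      exact (mem_of_mem_arcsOf (hdomarc t'' ht'' p hp)).1

end MengerAux

section DominatorAux
variable {N : PhyloNetwork V L}

lemma reaches_leaf_eq {l : V} (hleaf : IsLeafV N.arcs v) (h : Reaches N.arcs v l) : v = l := by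
  rcases Relation.ReflTransGen.cases_head h with h | ⟨c, hc, -⟩
  · exact h
  · exact absurd hc (leaf_no_out hleaf c)

lemma dominator_false (hsimple : SimpleNet N) {r : V} (hr : IsRoot N.arcs r)
    {v : V} (hvr : v ≠ r)
    {l1 l2 : V} (hl1 : IsLeafV N.arcs l1) (hl2 : IsLeafV N.arcs l2) (hne12 : l1 ≠ l2)
    (hdom : ∀ t, IsLeafV N.arcs t → ∀ p, IsPathFromTo N.arcs p r t → v ∈ p) : False := by
  haveI := N.vfin
  set A := N.arcs with hA
  set W : Set V := {w | Reaches A v w} with hW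
  have hleafW : ∀ t, IsLeafV A t → t ∈ W := by
    intro t ht
    obtain ⟨p, hp⟩ := reaches_path (root_reaches_all hr t)
    exact (mem_path_reaches hp (hdom t ht p hp)).2
  have hrW : r ∉ W := by
    intro hmem
    rcases (Relation.ReflTransGen.cases_tail hmem) with h | ⟨c, -, hc⟩
    · exact hvr h.symm
    · exact root_no_in hr c hc
  have hvleaf : ¬ IsLeafV A v := by
    intro hv
    have hlv : ∃ l, IsLeafV A l ∧ l ≠ v := by
      by_cases h : l1 = v
      · refine ⟨l2, hl2, ?_⟩
        rw [← h]
        exact Ne.symm hne12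
      · exact ⟨l1, hl1, h⟩
    obtain ⟨l, hl, hlvne⟩ := hlv
    obtain ⟨p, hp⟩ := reaches_path (root_reaches_all hr l)
    have hvp := hdom l hl p hp
    obtain ⟨z, -, hzA⟩ := out_arc_of_mem_ne_last hp hvp (Ne.symm hlvne)
    exact leaf_no_out hv z hzA
  have hUW : ∀ a b, (a, b) ∈ A → a ∉ W → b ∈ W → b = v := by
    intro a b hab haW hbW
    by_contra hbv
    obtain ⟨l, hl, hbl⟩ := reach_leaf (N := N) b
    obtain ⟨p2, hp2⟩ := reaches_path hbl
    have hvp2 : v ∉ p2 := by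
      intro hmem
      have h1 : Reaches A b v := (mem_path_reaches hp2 hmem).1
      exact hbv (reaches_antisym N.acyclic hbW h1).symm
    obtain ⟨p1, hp1⟩ := reaches_path (root_reaches_all hr a)
    have hvp1 : v ∉ p1 := by
      intro hmem
      exact haW (mem_path_reaches hp1 hmem).2
    obtain ⟨p3, hp3, hmem3⟩ := path_join hp1 hp2 hab
    rcases hmem3 v (hdom l hl p3 hp3) with h | h
    · exact hvp1 h
    · exact hvp2 h
  have hWU : ∀ a b, (a, b) ∈ A → a ∈ W → b ∈ W := fun a b hab ha => ha.tail hab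
  have hvin : ∀ z, (z, v) ∈ A → z ∉ W := by
    intro z hz hzW
    have : v = z := reaches_antisym N.acyclic hzW (Relation.ReflTransGen.single hz)
    rw [← this] at hz
    exact acyclic_irrefl N.acyclic v hz
  have hl1W : l1 ∈ W := hleafW l1 hl1
  have hl1v : l1 ≠ v := fun h => hvleaf (h ▸ hl1)
  rcases N.vertex_type v with ht | ht | ht | ht
  · exact hvr (N.root_unique v r ht hr)
  · -- split vertex: the unique in-arc is a nontrivial cut-arc
    obtain ⟨p0, hp0⟩ := in_arc_of_ne_root hr v hvr
    have hcut : CutArc A (p0, v) := by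
      refine ⟨hp0, ?_⟩
      intro hconn
      have hinv : ∀ y, Relation.ReflTransGen (UAdj (A \ {(p0, v)})) r y → y ∉ W := by
        intro y hy
        induction hy with
        | refl => exact hrW
        | tail hsteps hstep ih =>
          rename_i b c
          intro hcW
          rcases hstep with h | h
          · have hcv : c = v := hUW b c h.1 ih hcW
            subst hcv
            have hbp0 : b = p0 := in_unique_of_indeg_one ht.1 h.1 hp0
            exact h.2 (by rw [hbp0]; rfl)
          · exact ih (hWU c b h.1 hcW)
      exact hinv l1 (hconn r l1) hl1W
    exact hvleaf (hsimple.2 (p0, v) hcut)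
  · -- reticulation: the unique out-arc is a nontrivial cut-arc
    obtain ⟨s0, hs0set⟩ := Set.ncard_eq_one.1 ht.2
    have hs0 : (v, s0) ∈ A := by
      have : s0 ∈ {w | (v, w) ∈ A} := by rw [hs0set]; rfl
      exact this
    -- s0 is not a leaf
    have hreach_s0 : ∀ l, IsLeafV A l → l ≠ v → Reaches A s0 l := by
      intro l hl hlvne
      obtain ⟨p, hp⟩ := reaches_path ((hleafW l hl : Reaches A v l))
      obtain ⟨x, tl, hpeq, hxA, -⟩ := second_vertex hp (Ne.symm hlvne)
      have hxs0 : x = s0 := out_unique_of_outdeg_one ht.2 hxA hs0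
      subst hxs0
      have hsuf := (split_path hp (show p = [v] ++ x :: tl by rw [hpeq]; rfl)).2.1
      exact hsuf.reaches
    have hs0leaf : ¬ IsLeafV A s0 := by
      intro hs0l
      have hl2v : l2 ≠ v := fun h => hvleaf (h ▸ hl2)
      have e1 : s0 = l1 := reaches_leaf_eq hs0l (hreach_s0 l1 hl1 hl1v)
      have e2 : s0 = l2 := reaches_leaf_eq hs0l (hreach_s0 l2 hl2 hl2v)
      exact hne12 (e1 ▸ e2)
    have hcut : CutArc A (v, s0) := by
      refine ⟨hs0, ?_⟩
      intro hconn
      have hinv : ∀ y, Relation.ReflTransGen (UAdj (A \ {(v, s0)})) r y → (y ∈ W → y = v) := by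
        intro y hy
        induction hy with
        | refl => exact fun h => absurd h hrW
        | tail hsteps hstep ih =>
          rename_i b c
          intro hcW
          rcases hstep with h | h
          · by_cases hbW : b ∈ W
            · have hbv : b = v := ih hbW
              subst hbv
              have : c = s0 := out_unique_of_outdeg_one ht.2 h.1 hs0
              exact absurd (by rw [this]; rfl) h.2
            · exact hUW b c h.1 hbW hcW
          · by_cases hbW : b ∈ W
            · have hbv : b = v := ih hbW
              subst hbv
              exact absurd hcW (hvin c h.1)
            · exact absurd (hWU c b h.1 hcW) hbW
      exact hl1v (hinv l1 (hconn r l1) hl1W)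
    exact hs0leaf (hsimple.2 (v, s0) hcut)
  · exact hvleaf ht

end DominatorAux

section EmbAux
variable {A : Set (V × V)} {p q : List V} {u v w : V}

lemma intDisjoint_single {w : V} (h : ∀ x, x ∈ p → x ∈ q → x = w)
    (hp : IsEndpoint p w) (hq : IsEndpoint q w) : IntDisjoint p q := by
  intro x hx1 hx2
  have hxw := h x hx1 hx2
  subst hxw
  exact ⟨hp, hq⟩

lemma intDisjoint_empty (h : ∀ x, x ∈ p → x ∈ q → False) : IntDisjoint p q :=
  fun x hx1 hx2 => (h x hx1 hx2).elim

lemma IsPathFromTo.endpoint_head (h : IsPathFromTo A p u v) : IsEndpoint p u := Or.inl h.2.1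

lemma IsPathFromTo.endpoint_last (h : IsPathFromTo A p u v) : IsEndpoint p v := Or.inr h.2.2

lemma head_not_mem_suffix {l₁ l₂ : List V} (hnd : (l₁ ++ w :: l₂).Nodup)
    (hh : (l₁ ++ w :: l₂).head? = some u) (hwu : w ≠ u) : u ∉ w :: l₂ := by
  cases l₁ with
  | nil => simp at hh; exact absurd hh hwu
  | cons a t =>
    simp at hh
    subst hh
    intro hmem
    rw [List.nodup_append] at hnd
    exact hnd.2.2 _ (List.mem_cons_self) _ hmem rfl

lemma nodup_split_left_not {l₁ l₂ : List V} (hnd : (l₁ ++ w :: l₂).Nodup) : w ∉ l₁ := by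
  rw [List.nodup_append] at hnd
  intro hmem
  exact hnd.2.2 _ hmem _ (List.mem_cons_self) rfl

lemma nodup_split_right_not {l₁ l₂ : List V} (hnd : (l₁ ++ w :: l₂).Nodup) : w ∉ l₂ := by
  rw [List.nodup_append] at hnd
  exact (List.nodup_cons.1 hnd.2.1).1

lemma mem_suffix_sub {l₁ l₂ : List V} {x : V} (hx : x ∈ w :: l₂) : x ∈ l₁ ++ w :: l₂ :=
  List.mem_append.2 (Or.inr hx)

lemma mem_prefix_sub {l₁ l₂ : List V} {x : V} (hx : x ∈ l₁ ++ [w]) : x ∈ l₁ ++ w :: l₂ := by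
  rcases List.mem_append.1 hx with hx | hx
  · exact List.mem_append.2 (Or.inl hx)
  · simp at hx; subst hx; exact List.mem_append.2 (Or.inr (List.mem_cons_self))

end EmbAux

section CaseAux
variable {N : PhyloNetwork V L} {S : Set L}

lemma root_not_leaf {r : V} (hr : IsRoot N.arcs r) : ¬ IsLeafV N.arcs r := by
  intro h
  have h1 := hr.2
  rw [h.2] at h1
  simp at h1

lemma last_hit {A : Set (V × V)} {P : List V} {r y : V} (hP : IsPathFromTo A P r y)
    (M : Set V) (hrM : r ∈ M) :
    ∃ w l₂, IsPathFromTo A (w :: l₂) w y ∧ w ∈ M ∧ ∀ x ∈ l₂, x ∉ M := by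
  obtain ⟨l₁, w, l₂, hsp, hw, hcl⟩ := exists_last_mem_split ⟨r, hP.head_mem, hrM⟩
  exact ⟨w, l₂, (split_path hP hsp).2.1, hw, hcl⟩

/-- Case helper: a root cherry whose two endpoints are an S-leaf and a non-S-leaf. -/
lemma caseXY (hS : SNSet (TN N) S) {r : V} (hr : IsRoot N.arcs r)
    {a c b : V} {Q1 Q2 : List V}
    (ha : IsLeafV N.arcs a) (hc : IsLeafV N.arcs c) (hb : IsLeafV N.arcs b)
    (hlaS : N.lab a ∈ S) (hlcS : N.lab c ∉ S) (hlbS : N.lab b ∈ S)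
    (hba : b ≠ a)
    (hQ1 : IsPathFromTo N.arcs Q1 r a) (hQ2 : IsPathFromTo N.arcs Q2 r c)
    (hsh : ∀ x, x ∈ Q1 → x ∈ Q2 → x = r) :
    ∃ (a' b' c' q : V),
      IsLeafV N.arcs a' ∧ IsLeafV N.arcs b' ∧ IsLeafV N.arcs c' ∧
      N.lab a' ∈ S ∧ N.lab b' ∈ S ∧ N.lab c' ∉ S ∧
      a' ≠ b' ∧ a' ≠ c' ∧ b' ≠ c' ∧
      HasEmbedding N.arcs r q a' b' c' := by
  haveI := N.vfin
  have hac : a ≠ c := fun h => hlcS (h ▸ hlaS)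
  have hbc : b ≠ c := fun h => hlcS (h ▸ hlbS)
  have hanr : a ≠ r := fun h => root_not_leaf hr (h ▸ ha)
  have hcnr : c ≠ r := fun h => root_not_leaf hr (h ▸ hc)
  have hbnr : b ≠ r := fun h => root_not_leaf hr (h ▸ hb)
  obtain ⟨P, hP⟩ := reaches_path (root_reaches_all hr b)
  obtain ⟨w, l₂, htail, hwM, hclean⟩ :=
    last_hit hP {x | x ∈ Q1 ∨ x ∈ Q2} (Or.inl hQ1.head_mem)
  have hbM : b ∉ Q1 ∧ b ∉ Q2 := by
    constructor
    · intro hmem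
      exact hba (mem_last_of_no_out hQ1 hmem (leaf_no_out hb))
    · intro hmem
      exact hbc (mem_last_of_no_out hQ2 hmem (leaf_no_out hb))
  have hwb : w ≠ b := by
    intro h
    rcases hwM with hm | hm
    · exact hbM.1 (h ▸ hm)
    · exact hbM.2 (h ▸ hm)
  -- w is not a leaf
  obtain ⟨sw, tw, htaileq, hswA, -⟩ := second_vertex htail hwb
  have hwleaf : ¬ IsLeafV N.arcs w := not_leaf_of_out_arc hswA
  -- tail shares only w with Q1 ∪ Q2
  have htsh : ∀ x, x ∈ w :: l₂ → (x ∈ Q1 ∨ x ∈ Q2) → x = w := by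
    intro x hx hxM
    rcases List.mem_cons.1 hx with rfl | hx
    · rfl
    · exact absurd hxM (hclean x hx)
  by_cases hwr : w = r
  · -- three-fan at the root: impossible
    exfalso
    subst hwr
    refine no_three_fan hQ1 hQ2 htail hanr hcnr hbnr hac (Ne.symm hba) (fun h => hbc h.symm)
      hsh ?_ ?_
    · intro x hx1 hx2
      exact htsh x hx2 (Or.inl hx1)
    · intro x hx1 hx2
      exact htsh x hx2 (Or.inr hx1)
  · rcases hwM with hw1 | hw2
    · -- w on Q1: the goal case
      obtain ⟨B₁, B₂, hQ1eq⟩ := List.append_of_mem hw1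
      obtain ⟨hpre1, hsuf1, hps1⟩ := split_path hQ1 hQ1eq
      have hnd1 : (B₁ ++ w :: B₂).Nodup := by rw [← hQ1eq]; exact hQ1.nodup
      have hsufsub : ∀ x, x ∈ w :: B₂ → x ∈ Q1 := by
        intro x hx; rw [hQ1eq]; exact mem_suffix_sub hx
      have hpresub : ∀ x, x ∈ B₁ ++ [w] → x ∈ Q1 := by
        intro x hx; rw [hQ1eq]; exact mem_prefix_sub hx
      have hrsuf : r ∉ w :: B₂ :=
        head_not_mem_suffix hnd1 (by rw [← hQ1eq]; exact hQ1.2.1) hwr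
      have hwQ2 : w ∉ Q2 := fun h => hwr (hsh w hw1 h)
      have htailQ2 : ∀ x, x ∈ w :: l₂ → x ∈ Q2 → False := by
        intro x hx1 hx2
        have := htsh x hx1 (Or.inr hx2)
        subst this
        exact hwQ2 hx2
      refine ⟨a, b, c, w, ha, hb, hc, hlaS, hlbS, hlcS, Ne.symm hba, hac, hbc,
        fun h => hwr h.symm, w :: B₂, w :: l₂, B₁ ++ [w], Q2,
        hsuf1, htail, hpre1, hQ2, ?_, ?_, ?_, ?_, ?_, ?_⟩
      · -- suf1 vs tail
        refine intDisjoint_single (w := w) ?_ hsuf1.endpoint_head htail.endpoint_head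
        intro x hx1 hx2
        exact htsh x hx2 (Or.inl (hsufsub x hx1))
      · -- suf1 vs pre1
        refine intDisjoint_single (w := w) ?_ hsuf1.endpoint_head hpre1.endpoint_last
        intro x hx1 hx2
        exact hps1 x hx2 hx1
      · -- suf1 vs Q2
        refine intDisjoint_empty ?_
        intro x hx1 hx2
        have := hsh x (hsufsub x hx1) hx2
        subst this
        exact hrsuf hx1
      · -- tail vs pre1
        refine intDisjoint_single (w := w) ?_ htail.endpoint_head hpre1.endpoint_last
        intro x hx1 hx2
        exact htsh x hx1 (Or.inl (hpresub x hx2))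
      · -- tail vs Q2
        exact intDisjoint_empty htailQ2
      · -- pre1 vs Q2
        refine intDisjoint_single (w := r) ?_ hpre1.endpoint_head hQ2.endpoint_head
        intro x hx1 hx2
        exact hsh x (hpresub x hx1) hx2
    · -- w on Q2: forbidden triplet
      exfalso
      obtain ⟨B₁, B₂, hQ2eq⟩ := List.append_of_mem hw2
      obtain ⟨hpre2, hsuf2, hps2⟩ := split_path hQ2 hQ2eq
      have hnd2 : (B₁ ++ w :: B₂).Nodup := by rw [← hQ2eq]; exact hQ2.nodup
      have hsufsub : ∀ x, x ∈ w :: B₂ → x ∈ Q2 := by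
        intro x hx; rw [hQ2eq]; exact mem_suffix_sub hx
      have hpresub : ∀ x, x ∈ B₁ ++ [w] → x ∈ Q2 := by
        intro x hx; rw [hQ2eq]; exact mem_prefix_sub hx
      have hrsuf : r ∉ w :: B₂ :=
        head_not_mem_suffix hnd2 (by rw [← hQ2eq]; exact hQ2.2.1) hwr
      have hwQ1 : w ∉ Q1 := fun h => hwr (hsh w h hw2)
      have htailQ1 : ∀ x, x ∈ w :: l₂ → x ∈ Q1 → False := by
        intro x hx1 hx2
        have := htsh x hx1 (Or.inl hx2)
        subst this
        exact hwQ1 hx2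
      refine forb hS hb hc ha hlbS hlcS hlaS hbc hba (Ne.symm hac)
        ⟨fun h => hwr h.symm, w :: l₂, w :: B₂, B₁ ++ [w], Q1,
         htail, hsuf2, hpre2, hQ1, ?_, ?_, ?_, ?_, ?_, ?_⟩
      · -- tail vs suf2
        refine intDisjoint_single (w := w) ?_ htail.endpoint_head hsuf2.endpoint_head
        intro x hx1 hx2
        exact htsh x hx1 (Or.inr (hsufsub x hx2))
      · -- tail vs pre2
        refine intDisjoint_single (w := w) ?_ htail.endpoint_head hpre2.endpoint_last
        intro x hx1 hx2
        exact htsh x hx1 (Or.inr (hpresub x hx2))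
      · -- tail vs Q1
        exact intDisjoint_empty htailQ1
      · -- suf2 vs pre2
        refine intDisjoint_single (w := w) ?_ hsuf2.endpoint_head hpre2.endpoint_last
        intro x hx1 hx2
        exact hps2 x hx2 hx1
      · -- suf2 vs Q1
        refine intDisjoint_empty ?_
        intro x hx1 hx2
        have := hsh x hx2 (hsufsub x hx1)
        subst this
        exact hrsuf hx1
      · -- pre2 vs Q1
        refine intDisjoint_single (w := r) ?_ hpre2.endpoint_head hQ1.endpoint_head
        intro x hx1 hx2
        exact hsh x hx2 (hpresub x hx1)

end CaseAux

section CaseAux2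
variable {N : PhyloNetwork V L} {S : Set L}

lemma caseXXhalf (hS : SNSet (TN N) S) {r : V} (hr : IsRoot N.arcs r)
    {a b c w : V} {Q1 Q2 l₂ : List V}
    (ha : IsLeafV N.arcs a) (hb : IsLeafV N.arcs b) (hc : IsLeafV N.arcs c)
    (hlaS : N.lab a ∈ S) (hlbS : N.lab b ∈ S) (hlcS : N.lab c ∉ S)
    (hab : a ≠ b)
    (hQ1 : IsPathFromTo N.arcs Q1 r a) (hQ2 : IsPathFromTo N.arcs Q2 r b)
    (hsh : ∀ x, x ∈ Q1 → x ∈ Q2 → x = r)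
    (hw1 : w ∈ Q1) (hwr : w ≠ r)
    (htail : IsPathFromTo N.arcs (w :: l₂) w c)
    (hcl1 : ∀ x ∈ l₂, x ∉ Q1) (hcl2 : ∀ x ∈ l₂, x ∉ Q2) : False := by
  haveI := N.vfin
  have hac : a ≠ c := fun h => hlcS (h ▸ hlaS)
  have hbc : b ≠ c := fun h => hlcS (h ▸ hlbS)
  obtain ⟨B₁, B₂, hQ1eq⟩ := List.append_of_mem hw1
  obtain ⟨hpre1, hsuf1, hps1⟩ := split_path hQ1 hQ1eq
  have hnd1 : (B₁ ++ w :: B₂).Nodup := by rw [← hQ1eq]; exact hQ1.nodup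
  have hsufsub : ∀ x, x ∈ w :: B₂ → x ∈ Q1 := by
    intro x hx; rw [hQ1eq]; exact mem_suffix_sub hx
  have hpresub : ∀ x, x ∈ B₁ ++ [w] → x ∈ Q1 := by
    intro x hx; rw [hQ1eq]; exact mem_prefix_sub hx
  have hrsuf : r ∉ w :: B₂ :=
    head_not_mem_suffix hnd1 (by rw [← hQ1eq]; exact hQ1.2.1) hwr
  have hwQ2 : w ∉ Q2 := fun h => hwr (hsh w hw1 h)
  have htsh1 : ∀ x, x ∈ w :: l₂ → x ∈ Q1 → x = w := by
    intro x hx1 hx2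
    rcases List.mem_cons.1 hx1 with rfl | hx1
    · rfl
    · exact absurd hx2 (hcl1 x hx1)
  have htailQ2 : ∀ x, x ∈ w :: l₂ → x ∈ Q2 → False := by
    intro x hx1 hx2
    rcases List.mem_cons.1 hx1 with rfl | hx1
    · exact hwQ2 hx2
    · exact hcl2 x hx1 hx2
  refine forb hS ha hc hb hlaS hlcS hlbS hac hab (Ne.symm hbc)
    ⟨fun h => hwr h.symm, w :: B₂, w :: l₂, B₁ ++ [w], Q2,
     hsuf1, htail, hpre1, hQ2, ?_, ?_, ?_, ?_, ?_, ?_⟩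
  · refine intDisjoint_single (w := w) ?_ hsuf1.endpoint_head htail.endpoint_head
    intro x hx1 hx2
    exact htsh1 x hx2 (hsufsub x hx1)
  · refine intDisjoint_single (w := w) ?_ hsuf1.endpoint_head hpre1.endpoint_last
    intro x hx1 hx2
    exact hps1 x hx2 hx1
  · refine intDisjoint_empty ?_
    intro x hx1 hx2
    have := hsh x (hsufsub x hx1) hx2
    subst this
    exact hrsuf hx1
  · refine intDisjoint_single (w := w) ?_ htail.endpoint_head hpre1.endpoint_last
    intro x hx1 hx2
    exact htsh1 x hx1 (hpresub x hx2)
  · exact intDisjoint_empty htailQ2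
  · refine intDisjoint_single (w := r) ?_ hpre1.endpoint_head hQ2.endpoint_head
    intro x hx1 hx2
    exact hsh x (hpresub x hx1) hx2

lemma caseXX (hS : SNSet (TN N) S) {r : V} (hr : IsRoot N.arcs r)
    {a b c : V} {Q1 Q2 : List V}
    (ha : IsLeafV N.arcs a) (hb : IsLeafV N.arcs b) (hc : IsLeafV N.arcs c)
    (hlaS : N.lab a ∈ S) (hlbS : N.lab b ∈ S) (hlcS : N.lab c ∉ S)
    (hab : a ≠ b)
    (hQ1 : IsPathFromTo N.arcs Q1 r a) (hQ2 : IsPathFromTo N.arcs Q2 r b)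
    (hsh : ∀ x, x ∈ Q1 → x ∈ Q2 → x = r) : False := by
  haveI := N.vfin
  have hac : a ≠ c := fun h => hlcS (h ▸ hlaS)
  have hbc : b ≠ c := fun h => hlcS (h ▸ hlbS)
  have hanr : a ≠ r := fun h => root_not_leaf hr (h ▸ ha)
  have hbnr : b ≠ r := fun h => root_not_leaf hr (h ▸ hb)
  have hcnr : c ≠ r := fun h => root_not_leaf hr (h ▸ hc)
  obtain ⟨P, hP⟩ := reaches_path (root_reaches_all hr c)
  obtain ⟨w, l₂, htail, hwM, hclean⟩ :=
    last_hit hP {x | x ∈ Q1 ∨ x ∈ Q2} (Or.inl hQ1.head_mem)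
  have hcl1 : ∀ x ∈ l₂, x ∉ Q1 := fun x hx hm => hclean x hx (Or.inl hm)
  have hcl2 : ∀ x ∈ l₂, x ∉ Q2 := fun x hx hm => hclean x hx (Or.inr hm)
  by_cases hwr : w = r
  · subst hwr
    refine no_three_fan hQ1 hQ2 htail hanr hbnr hcnr hab hac hbc hsh ?_ ?_
    · intro x hx1 hx2
      rcases List.mem_cons.1 hx2 with rfl | hx2
      · rfl
      · exact absurd hx1 (hcl1 x hx2)
    · intro x hx1 hx2
      rcases List.mem_cons.1 hx2 with rfl | hx2
      · rfl
      · exact absurd hx1 (hcl2 x hx2)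
  · rcases hwM with hw1 | hw2
    · exact caseXXhalf hS hr ha hb hc hlaS hlbS hlcS hab hQ1 hQ2 hsh hw1 hwr htail hcl1 hcl2
    · exact caseXXhalf hS hr hb ha hc hlbS hlaS hlcS (Ne.symm hab) hQ2 hQ1
        (fun x h1 h2 => hsh x h2 h1) hw2 hwr htail hcl2 hcl1

end CaseAux2

section CaseAux3
variable {N : PhyloNetwork V L} {S : Set L}

lemma caseYYhalf (hS : SNSet (TN N) S) {r : V} (hr : IsRoot N.arcs r)
    {c1 c2 b b' w : V} {Q1 Q2 l₂ : List V}
    (hc1 : IsLeafV N.arcs c1) (hc2 : IsLeafV N.arcs c2)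
    (hbl : IsLeafV N.arcs b) (hb'l : IsLeafV N.arcs b')
    (hlc1 : N.lab c1 ∉ S) (hlc2 : N.lab c2 ∉ S)
    (hlb : N.lab b ∈ S) (hlb' : N.lab b' ∈ S)
    (hc12 : c1 ≠ c2) (hbb' : b ≠ b')
    (hQ1 : IsPathFromTo N.arcs Q1 r c1) (hQ2 : IsPathFromTo N.arcs Q2 r c2)
    (hsh : ∀ x, x ∈ Q1 → x ∈ Q2 → x = r)
    (hw1 : w ∈ Q1) (hwr : w ≠ r)
    (htail : IsPathFromTo N.arcs (w :: l₂) w b)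
    (hcl1 : ∀ x ∈ l₂, x ∉ Q1) (hcl2 : ∀ x ∈ l₂, x ∉ Q2) :
    ∃ (a' b'' c' q : V),
      IsLeafV N.arcs a' ∧ IsLeafV N.arcs b'' ∧ IsLeafV N.arcs c' ∧
      N.lab a' ∈ S ∧ N.lab b'' ∈ S ∧ N.lab c' ∉ S ∧
      a' ≠ b'' ∧ a' ≠ c' ∧ b'' ≠ c' ∧
      HasEmbedding N.arcs r q a' b'' c' := by
  haveI := N.vfin
  have hbc1 : b ≠ c1 := fun h => hlc1 (h ▸ hlb)
  have hbc2 : b ≠ c2 := fun h => hlc2 (h ▸ hlb)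
  have hb'c1 : b' ≠ c1 := fun h => hlc1 (h ▸ hlb')
  have hb'c2 : b' ≠ c2 := fun h => hlc2 (h ▸ hlb')
  have hc1nr : c1 ≠ r := fun h => root_not_leaf hr (h ▸ hc1)
  have hc2nr : c2 ≠ r := fun h => root_not_leaf hr (h ▸ hc2)
  have hb'nr : b' ≠ r := fun h => root_not_leaf hr (h ▸ hb'l)
  -- basic structure around w
  have hwQ2 : w ∉ Q2 := fun h => hwr (hsh w hw1 h)
  have htsh1 : ∀ x, x ∈ w :: l₂ → x ∈ Q1 → x = w := by
    intro x hx1 hx2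
    rcases List.mem_cons.1 hx1 with rfl | hx1
    · rfl
    · exact absurd hx2 (hcl1 x hx1)
  have htailQ2 : ∀ x, x ∈ w :: l₂ → x ∈ Q2 → False := by
    intro x hx1 hx2
    rcases List.mem_cons.1 hx1 with rfl | hx1
    · exact hwQ2 hx2
    · exact hcl2 x hx1 hx2
  have hwb : w ≠ b := by
    intro h
    exact hbc1 (mem_last_of_no_out hQ1 (h ▸ hw1) (leaf_no_out hbl))
  obtain ⟨sw, tw, -, hswA, -⟩ := second_vertex htail hwb
  have hwleaf : ¬ IsLeafV N.arcs w := not_leaf_of_out_arc hswA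
  obtain ⟨B₁, B₂, hQ1eq⟩ := List.append_of_mem hw1
  obtain ⟨hpre1, hsuf1, hps1⟩ := split_path hQ1 hQ1eq
  have hnd1 : (B₁ ++ w :: B₂).Nodup := by rw [← hQ1eq]; exact hQ1.nodup
  have hwB₁ : w ∉ B₁ := nodup_split_left_not hnd1
  have hwB₂ : w ∉ B₂ := nodup_split_right_not hnd1
  have hsufsub : ∀ x, x ∈ w :: B₂ → x ∈ Q1 := by
    intro x hx; rw [hQ1eq]; exact mem_suffix_sub hx
  have hpresub : ∀ x, x ∈ B₁ ++ [w] → x ∈ Q1 := by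
    intro x hx; rw [hQ1eq]; exact mem_prefix_sub hx
  have hrsuf : r ∉ w :: B₂ :=
    head_not_mem_suffix hnd1 (by rw [← hQ1eq]; exact hQ1.2.1) hwr
  -- the second X-leaf path and its last hit
  obtain ⟨P', hP'⟩ := reaches_path (root_reaches_all hr b')
  obtain ⟨w', l₂', htail', hw'M, hclean'⟩ :=
    last_hit hP' {x | x ∈ Q1 ∨ x ∈ Q2 ∨ x ∈ w :: l₂} (Or.inl hQ1.head_mem)
  have htsh' : ∀ x, x ∈ w' :: l₂' → (x ∈ Q1 ∨ x ∈ Q2 ∨ x ∈ w :: l₂) → x = w' := by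
    intro x hx1 hx2
    rcases List.mem_cons.1 hx1 with rfl | hx1
    · rfl
    · exact absurd hx2 (hclean' x hx1)
  have hw'b' : w' ≠ b' := by
    intro h
    subst h
    rcases hw'M with hm | hm | hm
    · exact hb'c1 (mem_last_of_no_out hQ1 hm (leaf_no_out hb'l))
    · exact hb'c2 (mem_last_of_no_out hQ2 hm (leaf_no_out hb'l))
    · exact hbb' (mem_last_of_no_out htail hm (leaf_no_out hb'l)).symm
  obtain ⟨sw', tw', -, hsw'A, -⟩ := second_vertex htail' hw'b'
  have hw'leaf : ¬ IsLeafV N.arcs w' := not_leaf_of_out_arc hsw'A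
  by_cases hw'r : w' = r
  · -- three-fan at the root with Q1, Q2, tail'
    exfalso
    subst hw'r
    refine no_three_fan hQ1 hQ2 htail' hc1nr hc2nr hb'nr hc12 (Ne.symm hb'c1) (Ne.symm hb'c2)
      hsh ?_ ?_
    · intro x hx1 hx2
      exact htsh' x hx2 (Or.inl hx1)
    · intro x hx1 hx2
      exact htsh' x hx2 (Or.inr (Or.inl hx1))
  · by_cases hw'w : w' = w
    · -- three-fan at w with suf1, tail, tail'
      exfalso
      subst hw'w
      have hc1w : c1 ≠ w' := fun h => hw'leaf (h ▸ hc1)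
      have hbw : b ≠ w' := fun h => hw'leaf (h ▸ hbl)
      have hb'w : b' ≠ w' := fun h => hw'leaf (h ▸ hb'l)
      refine no_three_fan hsuf1 htail htail' hc1w hbw hb'w (fun h => hbc1 h.symm)
        (fun h => hb'c1 h.symm) hbb' ?_ ?_ ?_
      · intro x hx1 hx2
        exact htsh1 x hx2 (hsufsub x hx1)
      · intro x hx1 hx2
        exact htsh' x hx2 (Or.inl (hsufsub x hx1))
      · intro x hx1 hx2
        exact htsh' x hx2 (Or.inr (Or.inr hx1))
    · rcases hw'M with hw'Q1 | hw'Q2 | hw'tail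
      · -- w' lies on Q1
        rw [hQ1eq] at hw'Q1
        rcases List.mem_append.1 hw'Q1 with hw'B₁ | hw'suf
        · -- w' strictly above w on Q1 : the goal case
          obtain ⟨C₁, C₂, hB₁eq⟩ := List.append_of_mem hw'B₁
          have hQ1eq' : Q1 = C₁ ++ w' :: (C₂ ++ w :: B₂) := by
            rw [hQ1eq, hB₁eq]; simp
          obtain ⟨hprew', hsufw', hps'⟩ := split_path hQ1 hQ1eq'
          have hsegeq : w' :: (C₂ ++ w :: B₂) = (w' :: C₂) ++ w :: B₂ := by simp
          obtain ⟨hseg', hsufB, hps''⟩ := split_path hsufw' hsegeq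
          have hw'w2 : w ≠ w' := fun h => hw'w h.symm
          have hsegsub : ∀ x, x ∈ (w' :: C₂) ++ [w] → x ∈ Q1 := by
            intro x hx
            rw [hQ1eq']
            exact mem_suffix_sub (mem_prefix_sub hx)
          have hprew'sub : ∀ x, x ∈ C₁ ++ [w'] → x ∈ Q1 := by
            intro x hx; rw [hQ1eq']; exact mem_prefix_sub hx
          have hndQ1 : (C₁ ++ w' :: (C₂ ++ w :: B₂)).Nodup := by
            rw [← hQ1eq']; exact hQ1.nodup
          have hrsuf' : r ∉ w' :: (C₂ ++ w :: B₂) :=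
            head_not_mem_suffix hndQ1 (by rw [← hQ1eq']; exact hQ1.2.1) hw'r
          have hwprew' : w ∉ C₁ ++ [w'] := by
            intro hx
            rcases List.mem_append.1 hx with hx | hx
            · exact hwB₁ (by rw [hB₁eq]; exact List.mem_append.2 (Or.inl hx))
            · simp at hx; exact hw'w2 hx
          -- the joined path w' → b
          obtain ⟨hwb', hwbmem⟩ := concat_path hseg' htail (by
            intro x hx1 hx2
            exact htsh1 x hx2 (hsegsub x hx1))
          refine ⟨b, b', c2, w', hbl, hb'l, hc2, hlb, hlb', hlc2, hbb', hbc2, hb'c2,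
            fun h => hw'r h.symm, _, w' :: l₂', C₁ ++ [w'], Q2,
            hwb', htail', hprew', hQ2, ?_, ?_, ?_, ?_, ?_, ?_⟩
          · -- wb vs tail'
            refine intDisjoint_single (w := w') ?_ hwb'.endpoint_head htail'.endpoint_head
            intro x hx1 hx2
            rcases (hwbmem x).1 hx1 with hx | hx
            · exact htsh' x hx2 (Or.inl (hsegsub x hx))
            · exact htsh' x hx2 (Or.inr (Or.inr hx))
          · -- wb vs prew'
            refine intDisjoint_single (w := w') ?_ hwb'.endpoint_head hprew'.endpoint_last
            intro x hx1 hx2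
            rcases (hwbmem x).1 hx1 with hx | hx
            · refine hps' x hx2 ?_
              rw [hsegeq]
              exact mem_prefix_sub hx
            · exfalso
              have := htsh1 x hx (hprew'sub x hx2)
              subst this
              exact hwprew' hx2
          · -- wb vs Q2
            refine intDisjoint_empty ?_
            intro x hx1 hx2
            rcases (hwbmem x).1 hx1 with hx | hx
            · have := hsh x (hsegsub x hx) hx2
              subst this
              apply hrsuf'
              rw [hsegeq]
              exact mem_prefix_sub hx
            · exact htailQ2 x hx hx2
          · -- tail' vs prew'
            refine intDisjoint_single (w := w') ?_ htail'.endpoint_head hprew'.endpoint_last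
            intro x hx1 hx2
            exact htsh' x hx1 (Or.inl (hprew'sub x hx2))
          · -- tail' vs Q2
            refine intDisjoint_empty ?_
            intro x hx1 hx2
            have hxw := htsh' x hx1 (Or.inr (Or.inl hx2))
            rw [hxw] at hx2
            have hw'Q1' : w' ∈ Q1 := by
              rw [hQ1eq']
              exact List.mem_append.2 (Or.inr (List.mem_cons_self))
            exact hw'r (hsh w' hw'Q1' hx2)
          · -- prew' vs Q2
            refine intDisjoint_single (w := r) ?_ hprew'.endpoint_head hQ2.endpoint_head
            intro x hx1 hx2
            exact hsh x (hprew'sub x hx1) hx2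
        · -- w' strictly below w on Q1 : forbidden triplet with summit w
          exfalso
          have hw'B₂ : w' ∈ B₂ := by
            rcases List.mem_cons.1 hw'suf with h | h
            · exact absurd h hw'w
            · exact h
          obtain ⟨C₁, C₂, hB₂eq⟩ := List.append_of_mem hw'B₂
          have hsufeq : w :: B₂ = (w :: C₁) ++ w' :: C₂ := by rw [hB₂eq]; simp
          obtain ⟨hseg, hsufc1, hpsw⟩ := split_path hsuf1 hsufeq
          have hndsuf : ((w :: C₁) ++ w' :: C₂).Nodup := by
            rw [← hsufeq]; exact hsuf1.nodup
          have hw'C : w' ∉ w :: C₁ := nodup_split_left_not hndsuf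
          have hww' : w ≠ w' := by
            intro h; exact hw'C (h ▸ List.mem_cons_self)
          have hsegsub : ∀ x, x ∈ (w :: C₁) ++ [w'] → x ∈ Q1 := by
            intro x hx
            apply hsufsub
            rw [hsufeq]
            exact mem_prefix_sub hx
          have hsufc1sub : ∀ x, x ∈ w' :: C₂ → x ∈ Q1 := by
            intro x hx
            apply hsufsub
            rw [hsufeq]
            exact mem_suffix_sub hx
          have hwsufc1 : w ∉ w' :: C₂ := by
            intro hx
            rcases List.mem_cons.1 hx with h | h
            · exact hww' h
            · exact hwB₂ (by rw [hB₂eq]; exact List.mem_append.2 (Or.inr (List.mem_cons_of_mem _ h)))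
          refine forb hS hb'l hc1 hbl hlb' hlc1 hlb hb'c1 (Ne.symm hbb') (fun h => hbc1 h.symm)
            ⟨hww', w' :: l₂', w' :: C₂, (w :: C₁) ++ [w'], w :: l₂,
             htail', hsufc1, hseg, htail, ?_, ?_, ?_, ?_, ?_, ?_⟩
          · -- tail' vs sufc1
            refine intDisjoint_single (w := w') ?_ htail'.endpoint_head hsufc1.endpoint_head
            intro x hx1 hx2
            exact htsh' x hx1 (Or.inl (hsufc1sub x hx2))
          · -- tail' vs seg
            refine intDisjoint_single (w := w') ?_ htail'.endpoint_head hseg.endpoint_last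
            intro x hx1 hx2
            exact htsh' x hx1 (Or.inl (hsegsub x hx2))
          · -- tail' vs tail
            refine intDisjoint_empty ?_
            intro x hx1 hx2
            have hxw := htsh' x hx1 (Or.inr (Or.inr hx2))
            rw [hxw] at hx2
            have hw'Q1mem : w' ∈ Q1 := by
              rw [hQ1eq]
              apply List.mem_append.2
              refine Or.inr (List.mem_cons_of_mem _ ?_)
              rw [hB₂eq]
              exact List.mem_append.2 (Or.inr (List.mem_cons_self))
            have h2 := htsh1 w' hx2 hw'Q1mem
            exact hww' h2.symm
          · -- sufc1 vs seg
            refine intDisjoint_single (w := w') ?_ hsufc1.endpoint_head hseg.endpoint_last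
            intro x hx1 hx2
            exact hpsw x hx2 hx1
          · -- sufc1 vs tail
            refine intDisjoint_empty ?_
            intro x hx1 hx2
            have := htsh1 x hx2 (hsufc1sub x hx1)
            subst this
            exact hwsufc1 hx1
          · -- seg vs tail
            refine intDisjoint_single (w := w) ?_ hseg.endpoint_head htail.endpoint_head
            intro x hx1 hx2
            exact htsh1 x hx2 (hsegsub x hx1)
      · -- w' lies on Q2 : forbidden triplet with summit r
        exfalso
        obtain ⟨D₁, D₂, hQ2eq⟩ := List.append_of_mem hw'Q2
        obtain ⟨hpre2, hsuf2, hps2⟩ := split_path hQ2 hQ2eq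
        have hnd2 : (D₁ ++ w' :: D₂).Nodup := by rw [← hQ2eq]; exact hQ2.nodup
        have hsuf2sub : ∀ x, x ∈ w' :: D₂ → x ∈ Q2 := by
          intro x hx; rw [hQ2eq]; exact mem_suffix_sub hx
        have hpre2sub : ∀ x, x ∈ D₁ ++ [w'] → x ∈ Q2 := by
          intro x hx; rw [hQ2eq]; exact mem_prefix_sub hx
        have hrsuf2 : r ∉ w' :: D₂ :=
          head_not_mem_suffix hnd2 (by rw [← hQ2eq]; exact hQ2.2.1) hw'r
        have hw'Q1 : w' ∉ Q1 := fun h => hw'r (hsh w' h hw'Q2)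
        have hw'tail : w' ∉ w :: l₂ := fun h => htailQ2 w' h hw'Q2
        -- joined path r → b
        obtain ⟨hrb, hrbmem⟩ := concat_path hpre1 htail (by
          intro x hx1 hx2
          exact htsh1 x hx2 (hpresub x hx1))
        refine forb hS hb'l hc2 hbl hlb' hlc2 hlb hb'c2 (Ne.symm hbb') (fun h => hbc2 h.symm)
          ⟨fun h => hw'r h.symm, w' :: l₂', w' :: D₂, D₁ ++ [w'], _,
           htail', hsuf2, hpre2, hrb, ?_, ?_, ?_, ?_, ?_, ?_⟩
        · refine intDisjoint_single (w := w') ?_ htail'.endpoint_head hsuf2.endpoint_head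
          intro x hx1 hx2
          exact htsh' x hx1 (Or.inr (Or.inl (hsuf2sub x hx2)))
        · refine intDisjoint_single (w := w') ?_ htail'.endpoint_head hpre2.endpoint_last
          intro x hx1 hx2
          exact htsh' x hx1 (Or.inr (Or.inl (hpre2sub x hx2)))
        · -- tail' vs rb
          refine intDisjoint_empty ?_
          intro x hx1 hx2
          have hx2' : x ∈ Q1 ∨ x ∈ w :: l₂ := by
            rcases (hrbmem x).1 hx2 with hx | hx
            · exact Or.inl (hpresub x hx)
            · exact Or.inr hx
          have := htsh' x hx1 (by
            rcases hx2' with h | h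
            · exact Or.inl h
            · exact Or.inr (Or.inr h))
          subst this
          rcases hx2' with h | h
          · exact hw'Q1 h
          · exact hw'tail h
        · refine intDisjoint_single (w := w') ?_ hsuf2.endpoint_head hpre2.endpoint_last
          intro x hx1 hx2
          exact hps2 x hx2 hx1
        · -- suf2 vs rb
          refine intDisjoint_empty ?_
          intro x hx1 hx2
          rcases (hrbmem x).1 hx2 with hx | hx
          · have := hsh x (hpresub x hx) (hsuf2sub x hx1)
            subst this
            exact hrsuf2 hx1
          · exact htailQ2 x hx (hsuf2sub x hx1)
        · -- pre2 vs rb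
          refine intDisjoint_single (w := r) ?_ hpre2.endpoint_head hrb.endpoint_head
          intro x hx1 hx2
          rcases (hrbmem x).1 hx2 with hx | hx
          · exact (hsh x (hpresub x hx) (hpre2sub x hx1)).symm ▸
              (hsh x (hpresub x hx) (hpre2sub x hx1))
          · exact absurd (hpre2sub x hx1) (fun h => htailQ2 x hx h)
      · -- w' lies strictly inside the tail : the goal case with the tail split
        have hw'l₂ : w' ∈ l₂ := by
          rcases List.mem_cons.1 hw'tail with h | h
          · exact absurd h hw'w
          · exact h
        obtain ⟨D₁, D₂, hl₂eq⟩ := List.append_of_mem hw'l₂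
        have htaileq2 : w :: l₂ = (w :: D₁) ++ w' :: D₂ := by rw [hl₂eq]; simp
        obtain ⟨hsegwt, hsuft, hpst⟩ := split_path htail htaileq2
        have hsegsub : ∀ x, x ∈ (w :: D₁) ++ [w'] → x ∈ w :: l₂ := by
          intro x hx; rw [htaileq2]; exact mem_prefix_sub hx
        have hsuftsub : ∀ x, x ∈ w' :: D₂ → x ∈ w :: l₂ := by
          intro x hx; rw [htaileq2]; exact mem_suffix_sub hx
        have hndtail : ((w :: D₁) ++ w' :: D₂).Nodup := by rw [← htaileq2]; exact htail.nodup
        have hww' : w ≠ w' := fun h => hw'w h.symm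
        have hwsuft : w ∉ w' :: D₂ := by
          intro hx
          rcases List.mem_cons.1 hx with h | h
          · exact hww' h
          · refine (List.nodup_cons.1 htail.nodup).1 ?_
            rw [hl₂eq]
            exact List.mem_append.2 (Or.inr (List.mem_cons_of_mem _ h))
        have hw'Q1 : w' ∉ Q1 := hcl1 w' hw'l₂
        have hw'Q2 : w' ∉ Q2 := hcl2 w' hw'l₂
        -- joined path r → w'
        obtain ⟨hrw', hrw'mem⟩ := concat_path hpre1 hsegwt (by
          intro x hx1 hx2
          exact htsh1 x (hsegsub x hx2) (hpresub x hx1))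
        refine ⟨b, b', c2, w', hbl, hb'l, hc2, hlb, hlb', hlc2, hbb', hbc2, hb'c2,
          fun h => hw'r h.symm, w' :: D₂, w' :: l₂', _, Q2,
          hsuft, htail', hrw', hQ2, ?_, ?_, ?_, ?_, ?_, ?_⟩
        · -- suft vs tail'
          refine intDisjoint_single (w := w') ?_ hsuft.endpoint_head htail'.endpoint_head
          intro x hx1 hx2
          exact (htsh' x hx2 (Or.inr (Or.inr (hsuftsub x hx1))))
        · -- suft vs rw'
          refine intDisjoint_single (w := w') ?_ hsuft.endpoint_head hrw'.endpoint_last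
          intro x hx1 hx2
          rcases (hrw'mem x).1 hx2 with hx | hx
          · exfalso
            have := htsh1 x (hsuftsub x hx1) (hpresub x hx)
            subst this
            exact hwsuft hx1
          · exact hpst x hx hx1
        · -- suft vs Q2
          refine intDisjoint_empty ?_
          intro x hx1 hx2
          exact htailQ2 x (hsuftsub x hx1) hx2
        · -- tail' vs rw'
          refine intDisjoint_single (w := w') ?_ htail'.endpoint_head hrw'.endpoint_last
          intro x hx1 hx2
          rcases (hrw'mem x).1 hx2 with hx | hx
          · exact htsh' x hx1 (Or.inl (hpresub x hx))
          · exact htsh' x hx1 (Or.inr (Or.inr (hsegsub x hx)))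
        · -- tail' vs Q2
          refine intDisjoint_empty ?_
          intro x hx1 hx2
          have := htsh' x hx1 (Or.inr (Or.inl hx2))
          subst this
          exact hw'Q2 hx2
        · -- rw' vs Q2
          refine intDisjoint_single (w := r) ?_ hrw'.endpoint_head hQ2.endpoint_head
          intro x hx1 hx2
          rcases (hrw'mem x).1 hx1 with hx | hx
          · exact hsh x (hpresub x hx) hx2
          · exact absurd hx2 (fun h => htailQ2 x (hsegsub x hx) h)

lemma caseYY (hS : SNSet (TN N) S) {r : V} (hr : IsRoot N.arcs r)
    {c1 c2 b b' : V} {Q1 Q2 : List V}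
    (hc1 : IsLeafV N.arcs c1) (hc2 : IsLeafV N.arcs c2)
    (hbl : IsLeafV N.arcs b) (hb'l : IsLeafV N.arcs b')
    (hlc1 : N.lab c1 ∉ S) (hlc2 : N.lab c2 ∉ S)
    (hlb : N.lab b ∈ S) (hlb' : N.lab b' ∈ S)
    (hc12 : c1 ≠ c2) (hbb' : b ≠ b')
    (hQ1 : IsPathFromTo N.arcs Q1 r c1) (hQ2 : IsPathFromTo N.arcs Q2 r c2)
    (hsh : ∀ x, x ∈ Q1 → x ∈ Q2 → x = r) :
    ∃ (a' b'' c' q : V),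
      IsLeafV N.arcs a' ∧ IsLeafV N.arcs b'' ∧ IsLeafV N.arcs c' ∧
      N.lab a' ∈ S ∧ N.lab b'' ∈ S ∧ N.lab c' ∉ S ∧
      a' ≠ b'' ∧ a' ≠ c' ∧ b'' ≠ c' ∧
      HasEmbedding N.arcs r q a' b'' c' := by
  haveI := N.vfin
  have hbc1 : b ≠ c1 := fun h => hlc1 (h ▸ hlb)
  have hbc2 : b ≠ c2 := fun h => hlc2 (h ▸ hlb)
  have hc1nr : c1 ≠ r := fun h => root_not_leaf hr (h ▸ hc1)
  have hc2nr : c2 ≠ r := fun h => root_not_leaf hr (h ▸ hc2)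
  have hbnr : b ≠ r := fun h => root_not_leaf hr (h ▸ hbl)
  obtain ⟨P, hP⟩ := reaches_path (root_reaches_all hr b)
  obtain ⟨w, l₂, htail, hwM, hclean⟩ :=
    last_hit hP {x | x ∈ Q1 ∨ x ∈ Q2} (Or.inl hQ1.head_mem)
  have hcl1 : ∀ x ∈ l₂, x ∉ Q1 := fun x hx hm => hclean x hx (Or.inl hm)
  have hcl2 : ∀ x ∈ l₂, x ∉ Q2 := fun x hx hm => hclean x hx (Or.inr hm)
  by_cases hwr : w = r
  · exfalso
    subst hwr
    refine no_three_fan hQ1 hQ2 htail hc1nr hc2nr hbnr hc12 (Ne.symm hbc1) (Ne.symm hbc2)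
      hsh ?_ ?_
    · intro x hx1 hx2
      rcases List.mem_cons.1 hx2 with rfl | hx2
      · rfl
      · exact absurd hx1 (hcl1 x hx2)
    · intro x hx1 hx2
      rcases List.mem_cons.1 hx2 with rfl | hx2
      · rfl
      · exact absurd hx1 (hcl2 x hx2)
  · rcases hwM with hw1 | hw2
    · exact caseYYhalf hS hr hc1 hc2 hbl hb'l hlc1 hlc2 hlb hlb' hc12 hbb'
        hQ1 hQ2 hsh hw1 hwr htail hcl1 hcl2
    · exact caseYYhalf hS hr hc2 hc1 hbl hb'l hlc2 hlc1 hlb hlb' (Ne.symm hc12) hbb'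
        hQ2 hQ1 (fun x h1 h2 => hsh x h2 h1) hw2 hwr htail hcl2 hcl1

end CaseAux3

-- AUXEND

/-- (Existence of an in-out root embedding, from the proof of the
singleton lemma.)  Let `N` be a simple network with root `r` and let `S` be an SN-set
of `T(N)` with `1 < |S| < |L(N)|`.  Then there are leaves `x, z ∈ S` and a leaf
`y ∉ S` together with an embedding of the triplet `xz|y` in `N` whose summit is `r`. -/
theorem in_out_root_embedding (V L : Type) (N : PhyloNetwork V L)
    (hsimple : SimpleNet N) (r : V) (hr : IsRoot N.arcs r)
    (S : Set L) (hS : SNSet (TN N) S)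
    (h1 : 1 < S.ncard) (h2 : S.ncard < (leafSet N).ncard) :
    ∃ (a b c q : V),
      IsLeafV N.arcs a ∧ IsLeafV N.arcs b ∧ IsLeafV N.arcs c ∧
      N.lab a ∈ S ∧ N.lab b ∈ S ∧ N.lab c ∉ S ∧
      a ≠ b ∧ a ≠ c ∧ b ≠ c ∧
      HasEmbedding N.arcs r q a b c := by
  haveI := N.vfin
  have hSsub : S ⊆ leafSet N := fun x hx => tripletLeaves_TN_subset (hS.1 hx)
  have hSfin : S.Finite := leafSet_finite.subset hSsub
  obtain ⟨x1, x2, hx1S, hx2S, hx12⟩ := (Set.one_lt_ncard_iff hSfin).1 h1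
  obtain ⟨va, hva, hvax⟩ := hSsub hx1S
  obtain ⟨vb, hvb, hvbx⟩ := hSsub hx2S
  have hvaS : N.lab va ∈ S := by rw [hvax]; exact hx1S
  have hvbS : N.lab vb ∈ S := by rw [hvbx]; exact hx2S
  have hvab : va ≠ vb := by
    intro h
    apply hx12
    rw [← hvax, ← hvbx, h]
  have hYex : ∃ y ∈ leafSet N, y ∉ S := by
    by_contra h
    push_neg at h
    have := Set.ncard_le_ncard (fun y hy => h y hy) hSfin
    omega
  obtain ⟨y, hyL, hyS⟩ := hYex
  obtain ⟨vc, hvc, hvcy⟩ := hyL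
  have hvcS : N.lab vc ∉ S := by rw [hvcy]; exact hyS
  have hrnl : ¬ IsLeafV N.arcs r := root_not_leaf hr
  rcases dich (A := N.arcs) N.acyclic r {t | IsLeafV N.arcs t}
      hrnl (root_no_in hr)
      (fun t ht z => leaf_no_out ht z)
      (fun t ht u u' hu1 hu2 => in_unique_of_indeg_one ht.1 hu1 hu2)
      (fun v a a' b b' hne hi1 hi2 ho1 ho2 => two_in_unique_out hi1 hi2 hne ho1 ho2)
      ⟨va, hva, root_reaches_all hr va⟩ with
    ⟨t1, t2, p1, p2, ht1, ht2, hne, hp1, hp2, hshare⟩ | ⟨v, hvr, hdom⟩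
  · by_cases h1S : N.lab t1 ∈ S <;> by_cases h2S : N.lab t2 ∈ S
    · exact (caseXX hS hr ht1 ht2 hvc h1S h2S hvcS hne hp1 hp2 hshare).elim
    · have hbpick : ∃ bb, IsLeafV N.arcs bb ∧ N.lab bb ∈ S ∧ bb ≠ t1 := by
        by_cases hv1 : va = t1
        · exact ⟨vb, hvb, hvbS, fun h => hvab (hv1.trans h.symm)⟩
        · exact ⟨va, hva, hvaS, hv1⟩
      obtain ⟨bb, hbbl, hbbS, hbbne⟩ := hbpick
      exact caseXY hS hr ht1 ht2 hbbl h1S h2S hbbS hbbne hp1 hp2 hshare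
    · have hbpick : ∃ bb, IsLeafV N.arcs bb ∧ N.lab bb ∈ S ∧ bb ≠ t2 := by
        by_cases hv1 : va = t2
        · exact ⟨vb, hvb, hvbS, fun h => hvab (hv1.trans h.symm)⟩
        · exact ⟨va, hva, hvaS, hv1⟩
      obtain ⟨bb, hbbl, hbbS, hbbne⟩ := hbpick
      exact caseXY hS hr ht2 ht1 hbbl h2S h1S hbbS hbbne hp2 hp1
        (fun x hx1 hx2 => hshare x hx2 hx1)
    · exact caseYY hS hr ht1 ht2 hva hvb h1S h2S hvaS hvbS hne hvab hp1 hp2 hshare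
  · exact (dominator_false hsimple hr hvr hva hvb hvab
      (fun t ht p hp => hdom t ht p hp)).elim

end Phylo
end
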